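/- arXiv:1710.02518 — 12 statements merged into one kernel-verified Lean document; each statement's English description precedes it below -/
import Mathlib

section
/- Let U be a family of faces of a simplicial complex D. Then E(U*) ⊆ E(U), where E(·) denotes the set of essential vertices (vertices appearing in inclusion-minimal elements). In particular, if (U₁, U₂) is a dual pair (U₁ = U₂* and U₂ = U₁*), then E(U₁) = E(U₂). -/
variable {V : Type*} [DecidableEq V]

/-- A simplicial complex: a family of finite sets closed under taking subsets. -/
def IsComplex (D : Set (Finset V)) : Prop :=
  ∀ σ ∈ D, ∀ τ : Finset V, τ ⊆ σ → τ ∈ D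

/-- The intersecting dual `U*` of a family `U` of faces of `D`. -/
def dualSet (D U : Set (Finset V)) : Set (Finset V) :=
  {σ' ∈ D | ∀ σ ∈ U, (σ' ∩ σ).Nonempty}

/-- The upper set generated by `U` inside `D`. -/
def upperGen (D U : Set (Finset V)) : Set (Finset V) :=
  {σ' ∈ D | ∃ σ ∈ U, σ ⊆ σ'}

/-- Essential vertices: vertices appearing in inclusion-minimal elements of `U`. -/
def essVerts (U : Set (Finset V)) : Set V :=
  {v | ∃ σ ∈ U, v ∈ σ ∧ ∀ τ ∈ U, τ ⊆ σ → τ = σ}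

/-- Flag complex: every nonempty set of vertices pairwise spanning faces is a face. -/
def IsFlag (C : Set (Finset V)) : Prop :=
  ∀ τ : Finset V, τ.Nonempty → (∀ a ∈ τ, ∀ b ∈ τ, ({a, b} : Finset V) ∈ C) → τ ∈ C

/-- A facet: an inclusion-maximal face. -/
def IsFacet (C : Set (Finset V)) (A : Finset V) : Prop :=
  A ∈ C ∧ ∀ B ∈ C, A ⊆ B → B = A

/-- Pure of dimension `d`: every face lies in a facet and all facets have `d+1` vertices. -/
def IsPure (C : Set (Finset V)) (d : ℕ) : Prop :=
  (∀ σ ∈ C, ∃ A, IsFacet C A ∧ σ ⊆ A) ∧ ∀ A, IsFacet C A → A.card = d + 1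

/-- Without boundary: every non-maximal face lies in at least two facets. -/
def NoBoundary (C : Set (Finset V)) : Prop :=
  ∀ σ ∈ C, ¬ IsFacet C σ →
    ∃ A B, IsFacet C A ∧ IsFacet C B ∧ A ≠ B ∧ σ ⊆ A ∧ σ ⊆ B

/-- The missing edge exchange property for a pure `d`-complex. -/
def MEEP (C : Set (Finset V)) (d : ℕ) : Prop :=
  ∀ σ ∈ C, σ.card = d → ∀ v ∉ σ, IsFacet C (insert v σ) →
    ∃ u, u ≠ v ∧ u ∉ σ ∧ IsFacet C (insert u σ) ∧ ({u, v} : Finset V) ∉ C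

/-- The star of a vertex: the set of facets containing it. -/
def vertexStar (C : Set (Finset V)) (v : V) : Set (Finset V) :=
  {A | IsFacet C A ∧ v ∈ A}

/-- An intersecting family: any two members share a vertex. -/
def Intersecting (F : Set (Finset V)) : Prop :=
  ∀ A ∈ F, ∀ B ∈ F, (A ∩ B).Nonempty

/-- Pure-EKR: every intersecting family of facets is at most as large as some vertex star. -/
def PureEKR (C : Set (Finset V)) : Prop :=
  ∀ F : Set (Finset V), (∀ A ∈ F, IsFacet C A) → Intersecting F →
    ∃ v, ({v} : Finset V) ∈ C ∧ F.ncard ≤ (vertexStar C v).ncard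


lemma essVerts_dual_subset (D : Set (Finset V)) (hD : IsComplex D)
    (U : Set (Finset V)) : essVerts (dualSet D U) ⊆ essVerts U := by
  classical
  rintro v ⟨σ', hσ', hvσ', hmin⟩
  obtain ⟨hσ'D, hσ'int⟩ := hσ'
  -- σ' \ {v} is in D but not in U*, so some τ ∈ U misses σ' \ {v}
  have hsd : (σ' \ {v} : Finset V) ∈ D := hD σ' hσ'D _ (Finset.sdiff_subset)
  have hnot : (σ' \ {v} : Finset V) ∉ dualSet D U := by
    intro h
    have heq := hmin _ h (Finset.sdiff_subset)
    have : v ∈ σ' \ {v} := heq.symm ▸ hvσ'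
    simp at this
  have hex : ∃ τ ∈ U, (σ' \ {v}) ∩ τ = ∅ := by
    by_contra hc
    push_neg at hc
    exact hnot ⟨hsd, fun σ hσ => hc σ hσ⟩
  obtain ⟨τ0, hτ0U, hτ0d⟩ := hex
  -- pick τ of minimal cardinality among elements of U disjoint from σ' \ {v}
  obtain ⟨n, ⟨τ, hτU, hτd, hτc⟩, hnmin⟩ :=
    Nat.lt_wfRel.wf.has_min {n | ∃ τ ∈ U, (σ' \ {v}) ∩ τ = ∅ ∧ τ.card = n}
      ⟨τ0.card, τ0, hτ0U, hτ0d, rfl⟩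
  have hvτ : v ∈ τ := by
    obtain ⟨w, hw⟩ := hσ'int τ hτU
    have hwσ' := Finset.mem_of_mem_inter_left hw
    have hwτ := Finset.mem_of_mem_inter_right hw
    by_contra hv
    have : w ∈ (σ' \ {v}) ∩ τ := by
      refine Finset.mem_inter.2 ⟨Finset.mem_sdiff.2 ⟨hwσ', ?_⟩, hwτ⟩
      simp only [Finset.mem_singleton]
      rintro rfl; exact hv hwτ
    rw [hτd] at this; simp at this
  refine ⟨τ, hτU, hvτ, fun ρ hρU hρτ => ?_⟩
  have hρd : (σ' \ {v}) ∩ ρ = ∅ := by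
    rw [← Finset.subset_empty, ← hτd]
    exact Finset.inter_subset_inter_left hρτ
  have hρcard : ¬ ρ.card < n := hnmin ρ.card ⟨ρ, hρU, hρd, rfl⟩
  subst hτc
  exact (Finset.eq_of_subset_of_card_le hρτ (le_of_not_gt hρcard)).symm ▸ rfl

/-- E(U*) ⊆ E(U); in particular dual pairs have equal essential vertices. -/
theorem stmt2 (D : Set (Finset V)) (hD : IsComplex D)
    (U : Set (Finset V)) (hU : U ⊆ D) :
    essVerts (dualSet D U) ⊆ essVerts U ∧
      ∀ U₁ U₂ : Set (Finset V), U₁ ⊆ D → U₂ ⊆ D →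
        U₁ = dualSet D U₂ → U₂ = dualSet D U₁ →
        essVerts U₁ = essVerts U₂ := by
  refine ⟨essVerts_dual_subset D hD U, fun U₁ U₂ _ _ h1 h2 => ?_⟩
  apply Set.Subset.antisymm
  · rw [h1]; exact essVerts_dual_subset D hD U₂
  · rw [h2]; exact essVerts_dual_subset D hD U₁
end

section
/- A simplicial complex C is flag if and only if for every face σ of C the contraction C/σ is a simplicial complex (i.e., no two distinct cells of C/σ have the same vertex set). -/
variable {V : Type*} [DecidableEq V]

/-- C is flag iff every contraction C/σ is a simplicial complex, i.e. any
two faces of C mapping to cells of C/σ with the same vertex set (same difference with σ,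
and both meeting σ or both disjoint from σ) are glued, i.e. span a common face of C. -/
theorem stmt4 (C : Set (Finset V)) (hC : IsComplex C) :
    IsFlag C ↔ ∀ σ ∈ C, ∀ τ₁ ∈ C, ∀ τ₂ ∈ C,
      τ₁ \ σ = τ₂ \ σ → ((τ₁ ∩ σ).Nonempty ↔ (τ₂ ∩ σ).Nonempty) → τ₁ ∪ τ₂ ∈ C := by
  constructor
  · intro hflag σ hσ τ₁ h₁ τ₂ h₂ hdiff _
    rcases (τ₁ ∪ τ₂).eq_empty_or_nonempty with he | hne
    · rw [Finset.union_eq_empty] at he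
      rw [he.1, Finset.empty_union]
      exact h₂
    · apply hflag _ hne
      intro a ha b hb
      have key : ∀ x ∈ τ₁ ∪ τ₂, x ∈ σ ∨ (x ∈ τ₁ ∧ x ∈ τ₂) := by
        intro x hx
        rcases Finset.mem_union.mp hx with hx1 | hx2
        · by_cases hxs : x ∈ σ
          · exact Or.inl hxs
          · have : x ∈ τ₁ \ σ := Finset.mem_sdiff.mpr ⟨hx1, hxs⟩
            rw [hdiff] at this
            exact Or.inr ⟨hx1, (Finset.mem_sdiff.mp this).1⟩
        · by_cases hxs : x ∈ σ
          · exact Or.inl hxs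
          · have : x ∈ τ₂ \ σ := Finset.mem_sdiff.mpr ⟨hx2, hxs⟩
            rw [← hdiff] at this
            exact Or.inr ⟨(Finset.mem_sdiff.mp this).1, hx2⟩
      rcases key a ha with haσ | ha12
      · rcases key b hb with hbσ | hb12
        · exact hC σ hσ {a, b} (by
            intro x hx
            rcases Finset.mem_insert.mp hx with rfl | hx
            · exact haσ
            · rwa [Finset.mem_singleton.mp hx])
        · rcases Finset.mem_union.mp ha with ha1 | ha2
          · exact hC τ₁ h₁ {a, b} (by
              intro x hx
              rcases Finset.mem_insert.mp hx with rfl | hx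
              · exact ha1
              · rw [Finset.mem_singleton.mp hx]; exact hb12.1)
          · exact hC τ₂ h₂ {a, b} (by
              intro x hx
              rcases Finset.mem_insert.mp hx with rfl | hx
              · exact ha2
              · rw [Finset.mem_singleton.mp hx]; exact hb12.2)
      · rcases Finset.mem_union.mp hb with hb1 | hb2
        · exact hC τ₁ h₁ {a, b} (by
            intro x hx
            rcases Finset.mem_insert.mp hx with rfl | hx
            · exact ha12.1
            · rwa [Finset.mem_singleton.mp hx])
        · exact hC τ₂ h₂ {a, b} (by
            intro x hx
            rcases Finset.mem_insert.mp hx with rfl | hx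
            · exact ha12.2
            · rwa [Finset.mem_singleton.mp hx])
  · intro h τ
    induction τ using Finset.strongInduction with
    | _ τ ih =>
      intro hne hpairs
      obtain ⟨a, ha⟩ := hne
      by_cases hsing : τ = {a}
      · have := hpairs a ha a ha
        simpa [hsing] using this
      · have : ∃ b ∈ τ, b ≠ a := by
          by_contra hcon
          push_neg at hcon
          exact hsing (Finset.eq_singleton_iff_unique_mem.mpr ⟨ha, hcon⟩)
        obtain ⟨b, hb, hba⟩ := this
        have hσ : ({a, b} : Finset V) ∈ C := hpairs a ha b hb
        have hsub1 : τ.erase a ⊂ τ := Finset.erase_ssubset ha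
        have hsub2 : τ.erase b ⊂ τ := Finset.erase_ssubset hb
        have h1 : τ.erase a ∈ C := by
          apply ih _ hsub1 ⟨b, Finset.mem_erase.mpr ⟨hba, hb⟩⟩
          intro x hx y hy
          exact hpairs x (Finset.mem_of_mem_erase hx) y (Finset.mem_of_mem_erase hy)
        have h2 : τ.erase b ∈ C := by
          apply ih _ hsub2 ⟨a, Finset.mem_erase.mpr ⟨Ne.symm hba, ha⟩⟩
          intro x hx y hy
          exact hpairs x (Finset.mem_of_mem_erase hx) y (Finset.mem_of_mem_erase hy)
        have hd : τ.erase b \ {a, b} = τ.erase a \ {a, b} := by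
          ext x
          simp only [Finset.mem_sdiff, Finset.mem_erase, Finset.mem_insert,
            Finset.mem_singleton]
          tauto
        have hiff : ((τ.erase b ∩ {a, b}).Nonempty ↔ (τ.erase a ∩ {a, b}).Nonempty) := by
          constructor
          · intro _
            exact ⟨b, Finset.mem_inter.mpr ⟨Finset.mem_erase.mpr ⟨hba, hb⟩, by simp⟩⟩
          · intro _
            exact ⟨a, Finset.mem_inter.mpr ⟨Finset.mem_erase.mpr ⟨Ne.symm hba, ha⟩, by simp⟩⟩
        have := h {a, b} hσ (τ.erase b) h2 (τ.erase a) h1 hd hiff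
        have heq : τ.erase b ∪ τ.erase a = τ := by
          ext x
          simp only [Finset.mem_union, Finset.mem_erase]
          constructor
          · rintro (⟨_, hx⟩ | ⟨_, hx⟩) <;> exact hx
          · intro hx
            by_cases hxb : x = b
            · exact Or.inr ⟨by rw [hxb]; exact hba, hx⟩
            · exact Or.inl ⟨hxb, hx⟩
        rwa [heq] at this
end

section
/- Every flag pure simplicial complex without boundary has the missing edge exchange property. -/
variable {V : Type*} [DecidableEq V]

/-- every flag pure complex without boundary has the
missing edge exchange property. -/
theorem stmt5 (C : Set (Finset V)) (d : ℕ) (hC : IsComplex C)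
    (hflag : IsFlag C) (hpure : IsPure C d) (hnb : NoBoundary C) :
    MEEP C d := by
  intro σ hσ hcard v hv hfac
  -- σ is not a facet (wrong cardinality)
  have hσnf : ¬ IsFacet C σ := fun h => by
    have := hpure.2 σ h; omega
  obtain ⟨A, B, hA, hB, hAB, hσA, hσB⟩ := hnb σ hσ hσnf
  -- one of A, B is not insert v σ
  have key : ∀ B, IsFacet C B → σ ⊆ B → B ≠ insert v σ →
      ∃ u, u ≠ v ∧ u ∉ σ ∧ IsFacet C (insert u σ) ∧ ({u, v} : Finset V) ∉ C := by
    intro B hB hσB hne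
    have hcardB : B.card = d + 1 := hpure.2 B hB
    have h1 : (B \ σ).card = 1 := by
      rw [Finset.card_sdiff_of_subset hσB]; omega
    obtain ⟨u, hu⟩ := Finset.card_eq_one.mp h1
    have huB : u ∈ B \ σ := hu ▸ Finset.mem_singleton_self u
    have huσ : u ∉ σ := (Finset.mem_sdiff.mp huB).2
    have hBeq : B = insert u σ := by
      have := Finset.sdiff_union_of_subset hσB
      rw [hu] at this
      rw [← this, ← Finset.insert_eq]
    have huv : u ≠ v := by
      rintro rfl; exact hne hBeq
    refine ⟨u, huv, huσ, hBeq ▸ hB, ?_⟩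
    intro hedge
    -- flag: insert u (insert v σ) is a face, contradicting maximality of insert v σ
    set τ : Finset V := insert u (insert v σ) with hτ
    have hτC : τ ∈ C := by
      apply hflag τ ⟨u, Finset.mem_insert_self u _⟩
      intro a ha b hb
      have hmem : ∀ x ∈ τ, x = u ∨ x ∈ insert v σ := fun x hx => Finset.mem_insert.mp hx
      have hface1 : insert v σ ∈ C := hfac.1
      have hface2 : insert u σ ∈ C := hBeq ▸ hB.1
      rcases hmem a ha with rfl | hav
      · rcases hmem b hb with rfl | hbv
        · exact hC _ hface2 _ (by simp)
        · rcases Finset.mem_insert.mp hbv with rfl | hbσ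
          · exact hedge
          · exact hC _ hface2 _ (by
              intro x hx
              rcases Finset.mem_insert.mp hx with rfl | hx
              · exact Finset.mem_insert_self _ _
              · simp at hx; subst hx; exact Finset.mem_insert_of_mem hbσ)
      · rcases hmem b hb with rfl | hbv
        · rcases Finset.mem_insert.mp hav with rfl | haσ
          · rw [Finset.pair_comm]; exact hedge
          · exact hC _ hface2 _ (by
              intro x hx
              rcases Finset.mem_insert.mp hx with rfl | hx
              · exact Finset.mem_insert_of_mem haσ
              · simp at hx; subst hx; exact Finset.mem_insert_self _ _)
        · exact hC _ hface1 _ (by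
            intro x hx
            rcases Finset.mem_insert.mp hx with rfl | hx
            · exact hav
            · simp at hx; subst hx; exact hbv)
    have hsub : insert v σ ⊆ τ := Finset.subset_insert _ _
    have := hfac.2 τ hτC hsub
    have huτ : u ∈ τ := Finset.mem_insert_self _ _
    rw [this] at huτ
    rcases Finset.mem_insert.mp huτ with rfl | h
    · exact huv rfl
    · exact huσ h
  by_cases hAv : A = insert v σ
  · exact key B hB hσB (by rintro rfl; exact hAB hAv)
  · exact key A hA hσA hAv
end

section
/- If a pure simplicial complex C has the missing edge exchange property, then for every k < dim(C), the k-skeleton of C also has the missing edge exchange property. -/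
variable {V : Type*} [DecidableEq V]

/-- the missing edge exchange property passes to skeleta. -/
theorem stmt6 (C : Set (Finset V)) (d k : ℕ) (hC : IsComplex C)
    (hpure : IsPure C d) (hmeep : MEEP C d) (hk : k < d) :
    MEEP {σ ∈ C | σ.card ≤ k + 1} k := by
  intro σ hσ hcard v hv hfac
  obtain ⟨hivsC, hivscard⟩ := hfac.1
  obtain ⟨A, hAfac, hsub⟩ := hpure.1 _ hivsC
  have hAcard : A.card = d + 1 := hpure.2 A hAfac
  have hvA : v ∈ A := hsub (Finset.mem_insert_self v σ)
  have hρC : A.erase v ∈ C := hC A hAfac.1 _ (Finset.erase_subset v A)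
  have hρcard : (A.erase v).card = d := by
    rw [Finset.card_erase_of_mem hvA, hAcard]; omega
  have hvρ : v ∉ A.erase v := Finset.notMem_erase v A
  have hA' : insert v (A.erase v) = A := Finset.insert_erase hvA
  obtain ⟨u, huv, huρ, hufac, hedge⟩ :=
    hmeep _ hρC hρcard v hvρ (by rw [hA']; exact hAfac)
  have hσρ : σ ⊆ A.erase v := by
    intro x hx
    exact Finset.mem_erase.2 ⟨fun h => hv (h ▸ hx), hsub (Finset.mem_insert_of_mem hx)⟩
  have huσ : u ∉ σ := fun h => huρ (hσρ h)
  have huσC : insert u σ ∈ C :=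
    hC _ hufac.1 _ (Finset.insert_subset_insert u hσρ)
  have huσcard : (insert u σ).card = k + 1 := by
    rw [Finset.card_insert_of_notMem huσ, hcard]
  refine ⟨u, huv, huσ, ⟨⟨huσC, le_of_eq huσcard⟩, ?_⟩, ?_⟩
  · rintro B ⟨hBC, hBcard⟩ hsubB
    exact (Finset.eq_of_subset_of_card_le hsubB (by omega)).symm
  · rintro ⟨h, -⟩
    exact hedge h
end

section
/- Every dual pair in a flag 1-dimensional simplicial complex D (a simple graph with no triangles among its edges, viewed as a complex) is, up to isomorphism, one of: (∅, D); (⟨v⟩, ⟨v⟩) for a vertex v; (⟨u,v⟩, ⟨uv⟩) for an edge uv; or (⟨uv, wx⟩, ⟨vw, ux⟩) for an induced 4-cycle u,v,w,x. -/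
variable {V : Type*} [DecidableEq V]

set_option linter.unusedSectionVars false

lemma s7_inter_singleton {σ : Finset V} {x : V} :
    (σ ∩ ({x} : Finset V)).Nonempty ↔ x ∈ σ := by
  constructor
  · rintro ⟨z, hz⟩
    simp only [Finset.mem_inter, Finset.mem_singleton] at hz
    rcases hz with ⟨h1, rfl⟩; exact h1
  · intro h; exact ⟨x, by simp [h]⟩

lemma s7_inter_pair {σ : Finset V} {x y : V} :
    (σ ∩ ({x, y} : Finset V)).Nonempty ↔ x ∈ σ ∨ y ∈ σ := by
  constructor
  · rintro ⟨z, hz⟩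
    simp only [Finset.mem_inter, Finset.mem_insert, Finset.mem_singleton] at hz
    rcases hz with ⟨h1, rfl | rfl⟩
    · exact Or.inl h1
    · exact Or.inr h1
  · rintro (h | h)
    · exact ⟨x, by simp [h]⟩
    · exact ⟨y, by simp [h]⟩

lemma s7_singleton_mem {D : Set (Finset V)} (hD : IsComplex D) {σ : Finset V} (hσ : σ ∈ D)
    {v : V} (hv : v ∈ σ) : ({v} : Finset V) ∈ D :=
  hD σ hσ {v} (by simp [Finset.singleton_subset_iff, hv])

lemma s7_no_triangle {D : Set (Finset V)} (hD : IsComplex D) (hdim : ∀ σ ∈ D, σ.card ≤ 2)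
    (hflag : IsFlag D) {a b c : V} (hab : a ≠ b) (hac : a ≠ c) (hbc : b ≠ c)
    (e1 : ({a,b} : Finset V) ∈ D) (e2 : ({a,c} : Finset V) ∈ D)
    (e3 : ({b,c} : Finset V) ∈ D) : False := by
  have sa : ({a} : Finset V) ∈ D := s7_singleton_mem hD e1 (by simp)
  have sb : ({b} : Finset V) ∈ D := s7_singleton_mem hD e1 (by simp)
  have sc : ({c} : Finset V) ∈ D := s7_singleton_mem hD e2 (by simp)
  have habc : ({a,b,c} : Finset V) ∈ D := by
    apply hflag _ ⟨a, by simp⟩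
    intro x hx y hy
    simp only [Finset.mem_insert, Finset.mem_singleton] at hx hy
    rcases hx with rfl|rfl|rfl <;> rcases hy with rfl|rfl|rfl <;>
      first
        | simpa using sa | simpa using sb | simpa using sc
        | assumption
        | (rw [Finset.pair_comm]; assumption)
  have hle := hdim _ habc
  have hcard : ({a,b,c} : Finset V).card = 3 := by
    rw [Finset.card_insert_of_notMem (by simp [hab, hac]),
        Finset.card_insert_of_notMem (by simp [hbc])]
    rfl
  omega

lemma s7_face_cases {D : Set (Finset V)} (hdim : ∀ σ ∈ D, σ.card ≤ 2) {σ : Finset V}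
    (h : σ ∈ D) : σ = ∅ ∨ (∃ v, σ = {v}) ∨ ∃ u v, u ≠ v ∧ σ = ({u, v} : Finset V) := by
  have h2 := hdim σ h
  obtain h0 | h1 | h2' : σ.card = 0 ∨ σ.card = 1 ∨ σ.card = 2 := by omega
  · exact Or.inl (Finset.card_eq_zero.mp h0)
  · exact Or.inr (Or.inl (Finset.card_eq_one.mp h1))
  · obtain ⟨u, v, huv, rfl⟩ := Finset.card_eq_two.mp h2'
    exact Or.inr (Or.inr ⟨u, v, huv, rfl⟩)

lemma s7_eq_pair {D : Set (Finset V)} (hdim : ∀ σ ∈ D, σ.card ≤ 2) {σ : Finset V}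
    (hσ : σ ∈ D) {x y : V} (hxy : x ≠ y) (hsub : ({x, y} : Finset V) ⊆ σ) :
    σ = ({x, y} : Finset V) := by
  have hc : ({x, y} : Finset V).card = 2 := Finset.card_pair hxy
  exact (Finset.eq_of_subset_of_card_le hsub (by rw [hc]; exact hdim σ hσ)).symm

lemma s7_up_singleton {D : Set (Finset V)} {v : V} :
    upperGen D {({v} : Finset V)} = {σ ∈ D | v ∈ σ} := by
  ext σ; simp [upperGen, Finset.singleton_subset_iff]

lemma s7_up_two_singletons {D : Set (Finset V)} {u v : V} :
    upperGen D {({u} : Finset V), {v}} = {σ ∈ D | u ∈ σ ∨ v ∈ σ} := by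
  ext σ; simp [upperGen, Finset.singleton_subset_iff]

lemma s7_up_edge {D : Set (Finset V)} (hdim : ∀ σ ∈ D, σ.card ≤ 2) {u v : V} (huv : u ≠ v)
    (he : ({u, v} : Finset V) ∈ D) :
    upperGen D {({u, v} : Finset V)} = {({u, v} : Finset V)} := by
  ext σ
  simp only [upperGen, Set.mem_setOf_eq, Set.mem_singleton_iff]
  constructor
  · rintro ⟨hσ, τ, hτ, hsub⟩
    subst hτ
    exact s7_eq_pair hdim hσ huv hsub
  · rintro rfl
    exact ⟨he, {u, v}, rfl, le_refl _⟩

lemma s7_up_two_edges {D : Set (Finset V)} (hdim : ∀ σ ∈ D, σ.card ≤ 2)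
    {a b c d : V} (hab : a ≠ b) (hcd : c ≠ d)
    (he : ({a, b} : Finset V) ∈ D) (hf : ({c, d} : Finset V) ∈ D) :
    upperGen D {({a, b} : Finset V), {c, d}} = {({a, b} : Finset V), {c, d}} := by
  ext σ
  simp only [upperGen, Set.mem_setOf_eq, Set.mem_insert_iff, Set.mem_singleton_iff]
  constructor
  · rintro ⟨hσ, τ, hτ, hsub⟩
    rcases hτ with rfl | rfl
    · exact Or.inl (s7_eq_pair hdim hσ hab hsub)
    · exact Or.inr (s7_eq_pair hdim hσ hcd hsub)
  · rintro (rfl | rfl)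
    · exact ⟨he, {a, b}, Or.inl rfl, le_refl _⟩
    · exact ⟨hf, {c, d}, Or.inr rfl, le_refl _⟩

lemma s7_dual_empty {D : Set (Finset V)} : dualSet D (∅ : Set (Finset V)) = D := by
  ext σ; simp [dualSet]

lemma s7_singleton_case {D : Set (Finset V)} (hD : IsComplex D)
    (hdim : ∀ σ ∈ D, σ.card ≤ 2) (hflag : IsFlag D)
    {U₁ U₂ : Set (Finset V)}
    (h1 : U₁ = dualSet D U₂) (h2 : U₂ = dualSet D U₁)
    (hne2 : U₂.Nonempty) {v : V} (hv : {v} ∈ U₁) :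
    (∃ w : V, ({w} : Finset V) ∈ D ∧
      U₁ = upperGen D {({w} : Finset V)} ∧ U₂ = upperGen D {({w} : Finset V)}) ∨
    (∃ u w : V, u ≠ w ∧ ({u, w} : Finset V) ∈ D ∧
      U₁ = upperGen D {({u} : Finset V), {w}} ∧ U₂ = upperGen D {({u, w} : Finset V)}) := by
  have hvD : ({v} : Finset V) ∈ D := by rw [h1] at hv; exact hv.1
  -- every element of U₂ contains v
  have hU2v : ∀ σ ∈ U₂, v ∈ σ := by
    intro σ hσ
    rw [h2] at hσ
    exact s7_inter_singleton.mp (hσ.2 _ hv)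
  by_cases hall : ∀ τ ∈ U₁, v ∈ τ
  · -- U₁ = U₂ = star of v
    left
    refine ⟨v, hvD, ?_, ?_⟩
    · rw [s7_up_singleton]
      have hvU2 : ({v} : Finset V) ∈ U₂ := by
        rw [h2]
        exact ⟨hvD, fun τ hτ => ⟨v, by simp [hall τ hτ]⟩⟩
      ext τ
      constructor
      · intro hτ
        rw [h1] at hτ
        exact ⟨hτ.1, s7_inter_singleton.mp (hτ.2 _ hvU2)⟩
      · rintro ⟨hτD, hτv⟩
        rw [h1]
        exact ⟨hτD, fun σ hσ => ⟨v, by simp [hτv, hU2v σ hσ]⟩⟩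
    · rw [s7_up_singleton]
      ext σ
      constructor
      · intro hσ
        rw [h2] at hσ
        exact ⟨hσ.1, s7_inter_singleton.mp (hσ.2 _ hv)⟩
      · rintro ⟨hσD, hσv⟩
        rw [h2]
        exact ⟨hσD, fun τ hτ => ⟨v, by simp [hσv, hall τ hτ]⟩⟩
  · -- there is τ₀ ∈ U₁ not containing v
    push_neg at hall
    obtain ⟨τ₀, hτ₀U, hvτ₀⟩ := hall
    -- every σ ∈ U₂ has form {v, a} with a ∈ τ₀
    have hform : ∀ σ ∈ U₂, ∃ a ∈ τ₀, a ≠ v ∧ σ = ({v, a} : Finset V) := by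
      intro σ hσ
      have hσD : σ ∈ D := by rw [h2] at hσ; exact hσ.1
      obtain ⟨a, ha⟩ : (σ ∩ τ₀).Nonempty := by
        rw [h2] at hσ; exact hσ.2 _ hτ₀U
      simp only [Finset.mem_inter] at ha
      have hav : a ≠ v := fun h => hvτ₀ (h ▸ ha.2)
      refine ⟨a, ha.2, hav, ?_⟩
      exact s7_eq_pair hdim hσD (Ne.symm hav)
        (by intro z hz; simp only [Finset.mem_insert, Finset.mem_singleton] at hz
            rcases hz with rfl | rfl
            · exact hU2v σ hσ
            · exact ha.1)
    obtain ⟨σ₀, hσ₀⟩ := hne2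
    obtain ⟨a, haτ₀, hav, hσ₀eq⟩ := hform σ₀ hσ₀
    -- U₂ = {{v, a}}
    have hU2eq : U₂ = {({v, a} : Finset V)} := by
      ext σ
      constructor
      · intro hσ
        obtain ⟨b, hbτ₀, hbv, hσeq⟩ := hform σ hσ
        by_cases hba : b = a
        · subst hba; exact hσeq
        · exfalso
          have hτ₀D : τ₀ ∈ D := by rw [h1] at hτ₀U; exact hτ₀U.1
          have hτ₀eq : τ₀ = ({a, b} : Finset V) := by
            refine s7_eq_pair hdim hτ₀D (fun h => hba h.symm) ?_
            intro z hz
            simp only [Finset.mem_insert, Finset.mem_singleton] at hz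
            rcases hz with rfl | rfl
            · exact haτ₀
            · exact hbτ₀
          have hvaD : ({v, a} : Finset V) ∈ D := by
            rw [hσ₀eq] at hσ₀; rw [h2] at hσ₀; exact hσ₀.1
          have hvbD : ({v, b} : Finset V) ∈ D := by
            rw [hσeq] at hσ; rw [h2] at hσ; exact hσ.1
          exact s7_no_triangle hD hdim hflag (Ne.symm hav) (Ne.symm hbv)
            (fun h => hba h.symm) hvaD hvbD (hτ₀eq ▸ hτ₀D)
      · rintro rfl
        rw [← hσ₀eq]; exact hσ₀
    have hvaD : ({v, a} : Finset V) ∈ D := by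
      rw [hσ₀eq] at hσ₀; rw [h2] at hσ₀; exact hσ₀.1
    right
    refine ⟨v, a, Ne.symm hav, hvaD, ?_, ?_⟩
    · rw [s7_up_two_singletons]
      rw [h1, hU2eq]
      ext τ
      simp only [dualSet, Set.mem_setOf_eq, Set.mem_singleton_iff]
      constructor
      · rintro ⟨hτD, hτ⟩
        exact ⟨hτD, s7_inter_pair.mp (hτ _ rfl)⟩
      · rintro ⟨hτD, hτ⟩
        exact ⟨hτD, fun σ hσ => hσ ▸ s7_inter_pair.mpr hτ⟩
    · rw [s7_up_edge hdim (Ne.symm hav) hvaD, hU2eq]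


/-- classification of dual pairs in a flag 1-dimensional complex. -/
theorem stmt7 (D : Set (Finset V)) (hD : IsComplex D)
    (hdim : ∀ σ ∈ D, σ.card ≤ 2) (hflag : IsFlag D)
    (U₁ U₂ : Set (Finset V))
    (h1 : U₁ = dualSet D U₂) (h2 : U₂ = dualSet D U₁) :
    ((U₁ = ∅ ∧ U₂ = D) ∨ (U₂ = ∅ ∧ U₁ = D)) ∨
    (∃ v : V, ({v} : Finset V) ∈ D ∧
      U₁ = upperGen D {({v} : Finset V)} ∧ U₂ = upperGen D {({v} : Finset V)}) ∨
    (∃ u v : V, u ≠ v ∧ ({u, v} : Finset V) ∈ D ∧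
      ((U₁ = upperGen D {({u} : Finset V), {v}} ∧ U₂ = upperGen D {({u, v} : Finset V)}) ∨
       (U₂ = upperGen D {({u} : Finset V), {v}} ∧ U₁ = upperGen D {({u, v} : Finset V)}))) ∨
    (∃ u v w x : V, [u, v, w, x].Nodup ∧
      ({u, v} : Finset V) ∈ D ∧ ({v, w} : Finset V) ∈ D ∧
      ({w, x} : Finset V) ∈ D ∧ ({u, x} : Finset V) ∈ D ∧
      ({u, w} : Finset V) ∉ D ∧ ({v, x} : Finset V) ∉ D ∧
      ((U₁ = upperGen D {({u, v} : Finset V), {w, x}} ∧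
        U₂ = upperGen D {({v, w} : Finset V), {u, x}}) ∨
       (U₂ = upperGen D {({u, v} : Finset V), {w, x}} ∧
        U₁ = upperGen D {({v, w} : Finset V), {u, x}}))) := by
  by_cases hU1e : U₁ = ∅
  · exact Or.inl (Or.inl ⟨hU1e, by rw [h2, hU1e, s7_dual_empty]⟩)
  by_cases hU2e : U₂ = ∅
  · exact Or.inl (Or.inr ⟨hU2e, by rw [h1, hU2e, s7_dual_empty]⟩)
  have hne1 : U₁.Nonempty := Set.nonempty_iff_ne_empty.mpr hU1e
  have hne2 : U₂.Nonempty := Set.nonempty_iff_ne_empty.mpr hU2e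
  by_cases hs1 : ∃ v : V, ({v} : Finset V) ∈ U₁
  · obtain ⟨v, hv⟩ := hs1
    rcases s7_singleton_case hD hdim hflag h1 h2 hne2 hv with ⟨w, hwD, e1, e2⟩ | ⟨u, w, huw, hD', e1, e2⟩
    · exact Or.inr (Or.inl ⟨w, hwD, e1, e2⟩)
    · exact Or.inr (Or.inr (Or.inl ⟨u, w, huw, hD', Or.inl ⟨e1, e2⟩⟩))
  by_cases hs2 : ∃ v : V, ({v} : Finset V) ∈ U₂
  · obtain ⟨v, hv⟩ := hs2
    rcases s7_singleton_case hD hdim hflag h2 h1 hne1 hv with ⟨w, hwD, e1, e2⟩ | ⟨u, w, huw, hD', e1, e2⟩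
    · exact Or.inr (Or.inl ⟨w, hwD, e2, e1⟩)
    · exact Or.inr (Or.inr (Or.inl ⟨u, w, huw, hD', Or.inr ⟨e1, e2⟩⟩))
  push_neg at hs1 hs2
  -- no empty set in either
  have hU1D : U₁ ⊆ D := by rw [h1]; exact fun σ hσ => hσ.1
  have hU2D : U₂ ⊆ D := by rw [h2]; exact fun σ hσ => hσ.1
  have hemp1 : (∅ : Finset V) ∉ U₁ := by
    intro h
    rw [h1] at h
    obtain ⟨σ, hσ⟩ := hne2
    obtain ⟨z, hz⟩ := h.2 σ hσ
    simp at hz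
  have hemp2 : (∅ : Finset V) ∉ U₂ := by
    intro h
    rw [h2] at h
    obtain ⟨σ, hσ⟩ := hne1
    obtain ⟨z, hz⟩ := h.2 σ hσ
    simp at hz
  -- every element of U₁ (resp U₂) is an edge
  have hedge1 : ∀ σ ∈ U₁, ∃ p q : V, p ≠ q ∧ σ = ({p, q} : Finset V) := by
    intro σ hσ
    rcases s7_face_cases hdim (hU1D hσ) with rfl | ⟨w, rfl⟩ | h
    · exact absurd hσ hemp1
    · exact absurd hσ (hs1 w)
    · exact h
  have hedge2 : ∀ σ ∈ U₂, ∃ p q : V, p ≠ q ∧ σ = ({p, q} : Finset V) := by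
    intro σ hσ
    rcases s7_face_cases hdim (hU2D hσ) with rfl | ⟨w, rfl⟩ | h
    · exact absurd hσ hemp2
    · exact absurd hσ (hs2 w)
    · exact h
  obtain ⟨τ₀, hτ₀⟩ := hne1
  obtain ⟨a, b, hab, hτ₀eq⟩ := hedge1 τ₀ hτ₀
  subst hτ₀eq
  have habD : ({a, b} : Finset V) ∈ D := hU1D hτ₀
  have haD : ({a} : Finset V) ∈ D := s7_singleton_mem hD habD (by simp)
  have hbD : ({b} : Finset V) ∈ D := s7_singleton_mem hD habD (by simp)
  -- if every σ ∈ U₂ contains x, then {x} ∈ U₁ (contradiction)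
  have hnotall2 : ∀ x : V, ({x} : Finset V) ∈ D → ¬ (∀ σ ∈ U₂, x ∈ σ) := by
    intro x hxD hall
    exact hs1 x (by rw [h1]; exact ⟨hxD, fun σ hσ => ⟨x, by simp [hall σ hσ]⟩⟩)
  have hnotall1 : ∀ x : V, ({x} : Finset V) ∈ D → ¬ (∀ τ ∈ U₁, x ∈ τ) := by
    intro x hxD hall
    exact hs2 x (by rw [h2]; exact ⟨hxD, fun σ hσ => ⟨x, by simp [hall σ hσ]⟩⟩)
  -- find σ₁ = {a, c} ∈ U₂ with b ∉ σ₁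
  have hmeet2 : ∀ σ ∈ U₂, a ∈ σ ∨ b ∈ σ := by
    intro σ hσ
    rw [h2] at hσ
    rcases hσ.2 _ hτ₀ with ⟨z, hz⟩
    simp only [Finset.mem_inter, Finset.mem_insert, Finset.mem_singleton] at hz
    rcases hz with ⟨h, rfl | rfl⟩
    · exact Or.inl h
    · exact Or.inr h
  obtain ⟨σ₁, hσ₁U, hbσ₁⟩ : ∃ σ ∈ U₂, b ∉ σ := by
    by_contra h
    push_neg at h
    exact hnotall2 b hbD h
  obtain ⟨σ₂, hσ₂U, haσ₂⟩ : ∃ σ ∈ U₂, a ∉ σ := by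
    by_contra h
    push_neg at h
    exact hnotall2 a haD h
  have haσ₁ : a ∈ σ₁ := (hmeet2 σ₁ hσ₁U).resolve_right (fun h => hbσ₁ h)
  have hbσ₂ : b ∈ σ₂ := (hmeet2 σ₂ hσ₂U).resolve_left (fun h => haσ₂ h)
  obtain ⟨c, hc, hσ₁eq⟩ : ∃ c, c ≠ a ∧ σ₁ = ({a, c} : Finset V) := by
    obtain ⟨p, q, hpq, rfl⟩ := hedge2 σ₁ hσ₁U
    simp only [Finset.mem_insert, Finset.mem_singleton] at haσ₁
    rcases haσ₁ with rfl | rfl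
    · exact ⟨q, Ne.symm hpq, rfl⟩
    · exact ⟨p, hpq, Finset.pair_comm p a⟩
  obtain ⟨d, hd, hσ₂eq⟩ : ∃ d, d ≠ b ∧ σ₂ = ({b, d} : Finset V) := by
    obtain ⟨p, q, hpq, rfl⟩ := hedge2 σ₂ hσ₂U
    simp only [Finset.mem_insert, Finset.mem_singleton] at hbσ₂
    rcases hbσ₂ with rfl | rfl
    · exact ⟨q, Ne.symm hpq, rfl⟩
    · exact ⟨p, hpq, Finset.pair_comm p b⟩
  subst hσ₁eq; subst hσ₂eq
  have hcb : c ≠ b := fun h => hbσ₁ (by simp [h])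
  have hda : d ≠ a := fun h => haσ₂ (by simp [h])
  have hacD : ({a, c} : Finset V) ∈ D := hU2D hσ₁U
  have hbdD : ({b, d} : Finset V) ∈ D := hU2D hσ₂U
  have hcd : c ≠ d := by
    rintro rfl
    exact s7_no_triangle hD hdim hflag hab (Ne.symm hc) (Ne.symm hcb)
      habD hacD hbdD
  -- {c, d} ∈ U₁
  have hmeet1 : ∀ τ ∈ U₁, (a ∈ τ ∨ c ∈ τ) ∧ (b ∈ τ ∨ d ∈ τ) := by
    intro τ hτ
    rw [h1] at hτ
    constructor
    · exact s7_inter_pair.mp (hτ.2 _ hσ₁U)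
    · exact s7_inter_pair.mp (hτ.2 _ hσ₂U)
  have hcdU1 : ({c, d} : Finset V) ∈ U₁ := by
    by_contra hcdU
    -- get τ ∈ U₁ with a ∉ τ, deduce {b, c} ∈ U₁
    obtain ⟨τ, hτU, haτ⟩ : ∃ τ ∈ U₁, a ∉ τ := by
      by_contra h
      push_neg at h
      exact hnotall1 a haD h
    obtain ⟨τ', hτ'U, hbτ'⟩ : ∃ τ ∈ U₁, b ∉ τ := by
      by_contra h
      push_neg at h
      exact hnotall1 b hbD h
    have hcτ : c ∈ τ := ((hmeet1 τ hτU).1).resolve_left (fun h => haτ h)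
    have hdτ' : d ∈ τ' := ((hmeet1 τ' hτ'U).2).resolve_left (fun h => hbτ' h)
    have hbcD : ({b, c} : Finset V) ∈ D := by
      rcases (hmeet1 τ hτU).2 with hbτ | hdτ
      · have : τ = ({b, c} : Finset V) := by
          refine s7_eq_pair hdim (hU1D hτU) (Ne.symm hcb) ?_
          intro z hz
          simp only [Finset.mem_insert, Finset.mem_singleton] at hz
          rcases hz with rfl | rfl
          · exact hbτ
          · exact hcτ
        exact this ▸ hU1D hτU
      · exfalso
        have : τ = ({c, d} : Finset V) := by
          refine s7_eq_pair hdim (hU1D hτU) hcd ?_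
          intro z hz
          simp only [Finset.mem_insert, Finset.mem_singleton] at hz
          rcases hz with rfl | rfl
          · exact hcτ
          · exact hdτ
        exact hcdU (this ▸ hτU)
    have hadD : ({a, d} : Finset V) ∈ D := by
      rcases (hmeet1 τ' hτ'U).1 with haτ' | hcτ'
      · have : τ' = ({a, d} : Finset V) := by
          refine s7_eq_pair hdim (hU1D hτ'U) (Ne.symm hda) ?_
          intro z hz
          simp only [Finset.mem_insert, Finset.mem_singleton] at hz
          rcases hz with rfl | rfl
          · exact haτ'
          · exact hdτ'
        exact this ▸ hU1D hτ'U
      · exfalso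
        have : τ' = ({c, d} : Finset V) := by
          refine s7_eq_pair hdim (hU1D hτ'U) hcd ?_
          intro z hz
          simp only [Finset.mem_insert, Finset.mem_singleton] at hz
          rcases hz with rfl | rfl
          · exact hcτ'
          · exact hdτ'
        exact hcdU (this ▸ hτ'U)
    exact s7_no_triangle hD hdim hflag hab (Ne.symm hda) (Ne.symm hd)
      habD hadD hbdD
  have hcdD : ({c, d} : Finset V) ∈ D := hU1D hcdU1
  have hbcD : ({b, c} : Finset V) ∉ D := fun h =>
    s7_no_triangle hD hdim hflag hab (Ne.symm hc) (Ne.symm hcb) habD hacD h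
  have hadD : ({a, d} : Finset V) ∉ D := fun h =>
    s7_no_triangle hD hdim hflag hab (Ne.symm hda) (Ne.symm hd) habD h hbdD
  -- compute U₂ = {{a,c},{b,d}}
  have hU2eq : U₂ = {({a, c} : Finset V), ({b, d} : Finset V)} := by
    ext σ
    constructor
    · intro hσ
      have hcdm : c ∈ σ ∨ d ∈ σ := by
        rw [h2] at hσ
        exact s7_inter_pair.mp (hσ.2 _ hcdU1)
      have habm := hmeet2 σ hσ
      have hσD := hU2D hσ
      rcases habm with ha | hb
      · rcases hcdm with hcm | hdm
        · left
          refine s7_eq_pair hdim hσD (Ne.symm hc) ?_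
          intro z hz
          simp only [Finset.mem_insert, Finset.mem_singleton] at hz
          rcases hz with rfl | rfl
          exacts [ha, hcm]
        · exfalso
          apply hadD
          have : σ = ({a, d} : Finset V) := by
            refine s7_eq_pair hdim hσD (Ne.symm hda) ?_
            intro z hz
            simp only [Finset.mem_insert, Finset.mem_singleton] at hz
            rcases hz with rfl | rfl
            exacts [ha, hdm]
          exact this ▸ hσD
      · rcases hcdm with hcm | hdm
        · exfalso
          apply hbcD
          have : σ = ({b, c} : Finset V) := by
            refine s7_eq_pair hdim hσD (Ne.symm hcb) ?_
            intro z hz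
            simp only [Finset.mem_insert, Finset.mem_singleton] at hz
            rcases hz with rfl | rfl
            exacts [hb, hcm]
          exact this ▸ hσD
        · right
          refine s7_eq_pair hdim hσD (Ne.symm hd) ?_
          intro z hz
          simp only [Finset.mem_insert, Finset.mem_singleton] at hz
          rcases hz with rfl | rfl
          exacts [hb, hdm]
    · rintro (rfl | rfl)
      exacts [hσ₁U, hσ₂U]
  -- compute U₁ = {{a,b},{c,d}}
  have hU1eq : U₁ = {({a, b} : Finset V), ({c, d} : Finset V)} := by
    ext τ
    constructor
    · intro hτ
      obtain ⟨hac', hbd'⟩ := hmeet1 τ hτ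
      have hτD := hU1D hτ
      rcases hac' with ha | hc'
      · rcases hbd' with hb | hd'
        · left
          refine s7_eq_pair hdim hτD hab ?_
          intro z hz
          simp only [Finset.mem_insert, Finset.mem_singleton] at hz
          rcases hz with rfl | rfl
          exacts [ha, hb]
        · exfalso
          apply hadD
          have : τ = ({a, d} : Finset V) := by
            refine s7_eq_pair hdim hτD (Ne.symm hda) ?_
            intro z hz
            simp only [Finset.mem_insert, Finset.mem_singleton] at hz
            rcases hz with rfl | rfl
            exacts [ha, hd']
          exact this ▸ hτD
      · rcases hbd' with hb | hd'
        · exfalso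
          apply hbcD
          have : τ = ({b, c} : Finset V) := by
            refine s7_eq_pair hdim hτD (Ne.symm hcb) ?_
            intro z hz
            simp only [Finset.mem_insert, Finset.mem_singleton] at hz
            rcases hz with rfl | rfl
            exacts [hb, hc']
          exact this ▸ hτD
        · right
          refine s7_eq_pair hdim hτD hcd ?_
          intro z hz
          simp only [Finset.mem_insert, Finset.mem_singleton] at hz
          rcases hz with rfl | rfl
          exacts [hc', hd']
    · rintro (rfl | rfl)
      exacts [hτ₀, hcdU1]
  -- final: 4-cycle a, b, d, c
  refine Or.inr (Or.inr (Or.inr ⟨a, b, d, c, ?_, habD, hbdD, by rwa [Finset.pair_comm],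
    hacD, hadD, hbcD, Or.inl ⟨?_, ?_⟩⟩))
  · simp [hab, hda.symm, hc.symm, hd.symm, hcd.symm, hcb.symm]
  · rw [s7_up_two_edges hdim hab (Ne.symm hcd) habD (by rwa [Finset.pair_comm] at hcdD)]
    rw [hU1eq, Finset.pair_comm d c]
  · rw [s7_up_two_edges hdim (Ne.symm hd) (Ne.symm hc) hbdD hacD]
    rw [hU2eq]
    exact Set.pair_comm _ _
end

section
/- Let C be a flag pure d-dimensional simplicial complex, F an intersecting family of facets of C, and A ∈ F. If B and C' are facets of C such that B ∩ A and C' ∩ A partition A (they are disjoint and their union is A), then at most one of B and C' belongs to F. -/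
variable {V : Type*} [DecidableEq V]

/-- if B ∩ A and C' ∩ A partition the facet A of the intersecting family F,
then at most one of the facets B, C' lies in F. -/
theorem stmt8 (C : Set (Finset V)) (d : ℕ) (hC : IsComplex C) (hflag : IsFlag C)
    (hpure : IsPure C d)
    (F : Set (Finset V)) (hFfac : ∀ A ∈ F, IsFacet C A) (hFint : Intersecting F)
    (A : Finset V) (hA : A ∈ F)
    (B C' : Finset V) (hB : IsFacet C B) (hC' : IsFacet C C')
    (hpart₁ : (B ∩ A) ∪ (C' ∩ A) = A) (hpart₂ : (B ∩ A) ∩ (C' ∩ A) = ∅) :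
    ¬(B ∈ F ∧ C' ∈ F) := by
  rintro ⟨hBF, hCF⟩
  have hAfac : IsFacet C A := hFfac A hA
  obtain ⟨v, hv⟩ := hFint B hBF C' hCF
  have hvB : v ∈ B := (Finset.mem_inter.mp hv).1
  have hvC : v ∈ C' := (Finset.mem_inter.mp hv).2
  have hvA : v ∉ A := by
    intro h
    have : v ∈ (B ∩ A) ∩ (C' ∩ A) := by simp [hvB, hvC, h]
    rw [hpart₂] at this
    exact absurd this (Finset.notMem_empty v)
  -- every element of A lies in B or in C'
  have key : ∀ a ∈ A, a ∈ B ∨ a ∈ C' := by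
    intro a ha
    have : a ∈ (B ∩ A) ∪ (C' ∩ A) := by rw [hpart₁]; exact ha
    rcases Finset.mem_union.mp this with h | h
    · exact Or.inl (Finset.mem_inter.mp h).1
    · exact Or.inr (Finset.mem_inter.mp h).1
  have pair : ∀ a b : V, a ∈ insert v A → b ∈ insert v A → ({a, b} : Finset V) ∈ C := by
    intro a b ha hb
    have hsub : ∀ x y : V, x ∈ B → y ∈ B → ({x, y} : Finset V) ∈ C := fun x y hx hy =>
      hC B hB.1 _ (by intro z hz; rcases Finset.mem_insert.mp hz with h | h
                      · exact h ▸ hx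
                      · exact (Finset.mem_singleton.mp h) ▸ hy)
    have hsub' : ∀ x y : V, x ∈ C' → y ∈ C' → ({x, y} : Finset V) ∈ C := fun x y hx hy =>
      hC C' hC'.1 _ (by intro z hz; rcases Finset.mem_insert.mp hz with h | h
                        · exact h ▸ hx
                        · exact (Finset.mem_singleton.mp h) ▸ hy)
    have hsubA : ∀ x y : V, x ∈ A → y ∈ A → ({x, y} : Finset V) ∈ C := fun x y hx hy =>
      hC A hAfac.1 _ (by intro z hz; rcases Finset.mem_insert.mp hz with h | h
                         · exact h ▸ hx
                         · exact (Finset.mem_singleton.mp h) ▸ hy)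
    rcases Finset.mem_insert.mp ha with ha1 | ha2
    all_goals rcases Finset.mem_insert.mp hb with hb1 | hb2
    · subst ha1; subst hb1; exact hsub _ _ hvB hvB
    · subst ha1
      rcases key b hb2 with h | h
      · exact hsub _ _ hvB h
      · exact hsub' _ _ hvC h
    · subst hb1
      rcases key a ha2 with h | h
      · exact hsub _ _ h hvB
      · exact hsub' _ _ h hvC
    · exact hsubA _ _ ha2 hb2
  have hmem : insert v A ∈ C := by
    apply hflag _ ⟨v, Finset.mem_insert_self v A⟩
    intro a ha b hb; exact pair a b ha hb
  have := hAfac.2 _ hmem (Finset.subset_insert v A)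
  exact hvA (this ▸ Finset.mem_insert_self v A)
end

section
/- Let C be a flag pure d-dimensional simplicial complex without boundary, σ a face of C, and τ ⊆ σ with |τ| = k ≥ 1. Then the intersection of sectors S_τ = ∩_{a∈τ} (link_C(a) \ σ) is pure of dimension d − k. -/
variable {V : Type*} [DecidableEq V]

/-- The intersection of sectors S_τ = ∩_{a ∈ τ} (link_C(a) minus σ). -/
def SectorInt (C : Set (Finset V)) (σ τ : Finset V) : Set (Finset V) :=
  {ρ ∈ C | ρ ∩ σ = ∅ ∧ ∀ a ∈ τ, insert a ρ ∈ C}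

section Aux

variable {C : Set (Finset V)} {σ τ : Finset V}

lemma sector_mem {ρ : Finset V} (hρ : ρ ∈ SectorInt C σ τ) :
    ρ ∈ C ∧ ρ ∩ σ = ∅ ∧ ∀ a ∈ τ, insert a ρ ∈ C := hρ

lemma sector_disj (hτ : τ ⊆ σ) {ρ : Finset V} (hρ : ρ ∈ SectorInt C σ τ) :
    Disjoint τ ρ := by
  rw [Finset.disjoint_left]
  intro a haτ haρ
  have : a ∈ ρ ∩ σ := Finset.mem_inter.2 ⟨haρ, hτ haτ⟩
  rw [(sector_mem hρ).2.1] at this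
  exact absurd this (Finset.notMem_empty a)

lemma sector_union (hC : IsComplex C) (hflag : IsFlag C) (hσ : σ ∈ C)
    (hτ : τ ⊆ σ) (hτne : τ.Nonempty) {ρ : Finset V} (hρ : ρ ∈ SectorInt C σ τ) :
    τ ∪ ρ ∈ C := by
  obtain ⟨hρC, _, hins⟩ := sector_mem hρ
  apply hflag _ (hτne.mono Finset.subset_union_left)
  intro a ha b hb
  rcases Finset.mem_union.1 ha with ha | ha <;> rcases Finset.mem_union.1 hb with hb | hb
  · exact hC σ hσ _ (Finset.insert_subset (hτ ha) (Finset.singleton_subset_iff.2 (hτ hb)))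
  · exact hC _ (hins a ha) _
      (Finset.insert_subset (Finset.mem_insert_self a ρ)
        (Finset.singleton_subset_iff.2 (Finset.mem_insert_of_mem hb)))
  · rw [Finset.pair_comm]
    exact hC _ (hins b hb) _
      (Finset.insert_subset (Finset.mem_insert_self b ρ)
        (Finset.singleton_subset_iff.2 (Finset.mem_insert_of_mem ha)))
  · exact hC ρ hρC _
      (Finset.insert_subset ha (Finset.singleton_subset_iff.2 hb))

lemma face_card_le {d : ℕ} (hpure : IsPure C d) {γ : Finset V} (hγ : γ ∈ C) :
    γ.card ≤ d + 1 := by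
  obtain ⟨A, hA, hsub⟩ := hpure.1 γ hγ
  calc γ.card ≤ A.card := Finset.card_le_card hsub
    _ = d + 1 := hpure.2 A hA

lemma sector_card_le {d k : ℕ} (hC : IsComplex C) (hflag : IsFlag C)
    (hpure : IsPure C d) (hσ : σ ∈ C) (hτ : τ ⊆ σ) (hk : τ.card = k) (hk1 : 1 ≤ k)
    {ρ : Finset V} (hρ : ρ ∈ SectorInt C σ τ) : ρ.card + k ≤ d + 1 := by
  have hτne : τ.Nonempty := Finset.card_pos.1 (by omega)
  have h1 := face_card_le hpure (sector_union hC hflag hσ hτ hτne hρ)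
  rw [Finset.card_union_of_disjoint (sector_disj hτ hρ), hk] at h1
  omega

lemma sector_max_card {d k : ℕ} (hC : IsComplex C) (hflag : IsFlag C)
    (hpure : IsPure C d) (hnb : NoBoundary C) (hσ : σ ∈ C) (hτ : τ ⊆ σ)
    (hk : τ.card = k) (hk1 : 1 ≤ k) {ρ : Finset V} (hρ : ρ ∈ SectorInt C σ τ)
    (hmax : ∀ ρ' ∈ SectorInt C σ τ, ρ ⊆ ρ' → ρ' = ρ) : ρ.card + k = d + 1 := by
  have hle := sector_card_le hC hflag hpure hσ hτ hk hk1 hρ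
  by_contra hne
  have hlt : ρ.card + k < d + 1 := lt_of_le_of_ne hle hne
  have hτne : τ.Nonempty := Finset.card_pos.1 (by omega)
  obtain ⟨hρC, hρσ, hins⟩ := sector_mem hρ
  set γ := τ ∪ ρ with hγdef
  have hγ : γ ∈ C := sector_union hC hflag hσ hτ hτne hρ
  have hγcard : γ.card = k + ρ.card := by
    rw [Finset.card_union_of_disjoint (sector_disj hτ hρ), hk]
  have hγnf : ¬ IsFacet C γ := by
    intro h
    have := hpure.2 γ h
    omega
  obtain ⟨A, B, hA, hB, hAB, hγA, hγB⟩ := hnb γ hγ hγnf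
  -- every extra vertex of a facet containing γ lies in σ
  have key : ∀ D, IsFacet C D → γ ⊆ D → ∀ v ∈ D, v ∉ γ → v ∈ σ := by
    intro D hD hγD v hvD hvγ
    by_contra hvσ
    have hvρ : v ∉ ρ := fun h => hvγ (Finset.mem_union_right _ h)
    have hmem : insert v ρ ∈ SectorInt C σ τ := by
      refine ⟨hC D hD.1 _ (Finset.insert_subset hvD
        ((Finset.subset_union_right).trans hγD)), ?_, ?_⟩
      · rw [Finset.insert_inter_of_notMem hvσ, hρσ]
      · intro a ha
        refine hC D hD.1 _ ?_
        refine Finset.insert_subset (hγD (Finset.mem_union_left _ ha)) ?_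
        exact Finset.insert_subset hvD ((Finset.subset_union_right).trans hγD)
    have := hmax _ hmem (Finset.subset_insert v ρ)
    exact hvρ (this ▸ Finset.mem_insert_self v ρ)
  have hAσ : ∀ v ∈ A, v ∉ γ → v ∈ σ := key A hA hγA
  have hBσ : ∀ v ∈ B, v ∉ γ → v ∈ σ := key B hB hγB
  have pairσ : ∀ a b : V, a ∈ σ → b ∈ σ → ({a, b} : Finset V) ∈ C := fun a b ha hb =>
    hC σ hσ _ (Finset.insert_subset ha (Finset.singleton_subset_iff.2 hb))
  have pairF : ∀ D : Finset V, D ∈ C → ∀ a b : V, a ∈ D → b ∈ D →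
      ({a, b} : Finset V) ∈ C := fun D hD a b ha hb =>
    hC D hD _ (Finset.insert_subset ha (Finset.singleton_subset_iff.2 hb))
  have hABC : A ∪ B ∈ C := by
    apply hflag _ ((hτne.mono ((Finset.subset_union_left (s₂ := ρ)).trans hγA)).mono
      Finset.subset_union_left)
    intro a ha b hb
    rcases Finset.mem_union.1 ha with ha' | ha' <;>
      rcases Finset.mem_union.1 hb with hb' | hb'
    · exact pairF A hA.1 a b ha' hb'
    · by_cases hbA : b ∈ A
      · exact pairF A hA.1 a b ha' hbA
      · by_cases haB : a ∈ B
        · exact pairF B hB.1 a b haB hb'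
        · exact pairσ a b (hAσ a ha' (fun h => haB (hγB h)))
            (hBσ b hb' (fun h => hbA (hγA h)))
    · by_cases haA : a ∈ A
      · exact pairF A hA.1 a b haA hb'
      · by_cases hbB : b ∈ B
        · exact pairF B hB.1 a b ha' hbB
        · exact pairσ a b (hBσ a ha' (fun h => haA (hγA h)))
            (hAσ b hb' (fun h => hbB (hγB h)))
    · exact pairF B hB.1 a b ha' hb'
  have hABeq : A ∪ B = A := hA.2 _ hABC Finset.subset_union_left
  have hBA : B ⊆ A := by
    intro x hx
    rw [← hABeq]
    exact Finset.mem_union_right _ hx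
  exact hAB (hB.2 A hA.1 hBA)

lemma sector_exists_max {d k : ℕ} (hC : IsComplex C) (hflag : IsFlag C)
    (hpure : IsPure C d) (hσ : σ ∈ C) (hτ : τ ⊆ σ) (hk : τ.card = k) (hk1 : 1 ≤ k) :
    ∀ n : ℕ, ∀ ρ ∈ SectorInt C σ τ, d + 1 ≤ ρ.card + k + n →
      ∃ ρ' ∈ SectorInt C σ τ, ρ ⊆ ρ' ∧ ∀ ρ'' ∈ SectorInt C σ τ, ρ' ⊆ ρ'' → ρ'' = ρ' := by
  intro n
  induction n with
  | zero =>
    intro ρ hρ hn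
    refine ⟨ρ, hρ, subset_rfl, fun ρ'' hρ'' hsub => ?_⟩
    have := sector_card_le hC hflag hpure hσ hτ hk hk1 hρ''
    exact (Finset.eq_of_subset_of_card_le hsub (by omega)).symm
  | succ n ih =>
    intro ρ hρ hn
    by_cases hmax : ∀ ρ'' ∈ SectorInt C σ τ, ρ ⊆ ρ'' → ρ'' = ρ
    · exact ⟨ρ, hρ, subset_rfl, hmax⟩
    · push_neg at hmax
      obtain ⟨ρ', hρ', hsub, hne⟩ := hmax
      have hlt : ρ.card < ρ'.card :=
        Finset.card_lt_card (Finset.ssubset_iff_subset_ne.2 ⟨hsub, fun h => hne h.symm⟩)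
      obtain ⟨ρ'', h1, h2, h3⟩ := ih ρ' hρ' (by omega)
      exact ⟨ρ'', h1, hsub.trans h2, h3⟩

end Aux

/-- for a flag pure d-complex without boundary, the intersection of k ≥ 1
sectors is pure of dimension d - k (maximal elements have d - k + 1 vertices,
and every element is contained in a maximal one of that size). -/
theorem stmt10 (C : Set (Finset V)) (d k : ℕ) (hC : IsComplex C) (hflag : IsFlag C)
    (hpure : IsPure C d) (hnb : NoBoundary C)
    (σ τ : Finset V) (hσ : σ ∈ C) (hτ : τ ⊆ σ) (hk : τ.card = k) (hk1 : 1 ≤ k) :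
    (∀ ρ ∈ SectorInt C σ τ, (∀ ρ' ∈ SectorInt C σ τ, ρ ⊆ ρ' → ρ' = ρ) →
      ρ.card + k = d + 1) ∧
    (∀ ρ ∈ SectorInt C σ τ, ∃ ρ' ∈ SectorInt C σ τ, ρ ⊆ ρ' ∧ ρ'.card + k = d + 1) := by
  constructor
  · intro ρ hρ hmax
    exact sector_max_card hC hflag hpure hnb hσ hτ hk hk1 hρ hmax
  · intro ρ hρ
    obtain ⟨ρ', hρ', hsub, hmax⟩ :=
      sector_exists_max hC hflag hpure hσ hτ hk hk1 (d + 1) ρ hρ (by omega)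
    exact ⟨ρ', hρ', hsub,
      sector_max_card hC hflag hpure hnb hσ hτ hk hk1 hρ' hmax⟩
end

section
/- Let C be a flag d-dimensional simplicial manifold (or more generally a flag d-complex where every ridge is in exactly two facets and vertex links are as in a manifold) and v a vertex of C. Then the number of facets containing v is at most half the total number of facets of C. -/
variable {V : Type*} [DecidableEq V]

/-- in a flag pure d-complex in which every ridge lies in exactly two facets
(e.g. a flag closed d-manifold), each vertex star has at most half of all facets. -/
theorem stmt11 {V : Type*} [DecidableEq V] [Fintype V] (C : Set (Finset V)) (d : ℕ)
    (hC : IsComplex C) (hflag : IsFlag C) (hpure : IsPure C d)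
    (hridge : ∀ σ ∈ C, σ.card = d → {A | IsFacet C A ∧ σ ⊆ A}.ncard = 2)
    (v : V) (hv : ({v} : Finset V) ∈ C) :
    2 * (vertexStar C v).ncard ≤ {A | IsFacet C A}.ncard := by
  classical
  set S : Set (Finset V) := vertexStar C v with hS
  set T : Set (Finset V) := {A | IsFacet C A ∧ v ∉ A} with hT
  -- key existence: for A in the star there is another facet over the ridge A.erase v,
  -- and that facet avoids v
  have key : ∀ A ∈ S, ∃ B, IsFacet C B ∧ A.erase v ⊆ B ∧ v ∉ B := by
    intro A hA
    obtain ⟨hAf, hvA⟩ := hA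
    have hσC : A.erase v ∈ C := hC A hAf.1 _ (Finset.erase_subset _ _)
    have hσcard : (A.erase v).card = d := by
      have h1 := hpure.2 A hAf
      have h2 := Finset.card_erase_of_mem hvA
      omega
    have h2 := hridge _ hσC hσcard
    obtain ⟨a, b, hab, hset⟩ := Set.ncard_eq_two.1 h2
    have hAmem : A ∈ {B | IsFacet C B ∧ A.erase v ⊆ B} :=
      ⟨hAf, Finset.erase_subset _ _⟩
    rw [hset] at hAmem
    have hother : ∃ B, B ≠ A ∧ B ∈ ({a, b} : Set (Finset V)) := by
      simp only [Set.mem_insert_iff, Set.mem_singleton_iff] at hAmem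
      rcases hAmem with rfl | rfl
      · exact ⟨b, hab.symm, Or.inr rfl⟩
      · exact ⟨a, hab, Or.inl rfl⟩
    obtain ⟨B, hBA, hBmem⟩ := hother
    rw [← hset] at hBmem
    obtain ⟨hBf, hσB⟩ := hBmem
    refine ⟨B, hBf, hσB, ?_⟩
    intro hvB
    have hAB : A ⊆ B := by
      intro x hx
      by_cases hxv : x = v
      · exact hxv ▸ hvB
      · exact hσB (Finset.mem_erase.2 ⟨hxv, hx⟩)
    exact hBA (hAf.2 B hBf.1 hAB)
  -- the map
  have hfun : ∀ A, ∃ B, A ∈ S → IsFacet C B ∧ A.erase v ⊆ B ∧ v ∉ B := by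
    intro A
    by_cases h : A ∈ S
    · obtain ⟨B, hB⟩ := key A h; exact ⟨B, fun _ => hB⟩
    · exact ⟨∅, fun h' => absurd h' h⟩
  choose f hf using hfun
  have hmaps : ∀ A ∈ S, f A ∈ T := fun A hA => ⟨(hf A hA).1, (hf A hA).2.2⟩
  have hrecover : ∀ A ∈ S, insert v (A.erase v) = A := by
    intro A hA; exact Finset.insert_erase hA.2
  have hinj : Set.InjOn f S := by
    intro A₁ h₁ A₂ h₂ heq
    by_contra hne
    set B := f A₁ with hB
    obtain ⟨hBf, hσ₁B, hvB⟩ := hf A₁ h₁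
    obtain ⟨_, hσ₂B, _⟩ := hf A₂ h₂
    rw [← heq] at hσ₂B
    have hσne : A₁.erase v ≠ A₂.erase v := by
      intro h
      exact hne (by rw [← hrecover A₁ h₁, ← hrecover A₂ h₂, h])
    have hcard₁ : (A₁.erase v).card = d := by
      have ha := hpure.2 A₁ h₁.1
      have hb := Finset.card_erase_of_mem h₁.2
      omega
    have hcard₂ : (A₂.erase v).card = d := by
      have ha := hpure.2 A₂ h₂.1
      have hb := Finset.card_erase_of_mem h₂.2
      omega
    have hBcard : B.card = d + 1 := hpure.2 B hBf
    have hsub : A₁.erase v ∪ A₂.erase v ⊆ B := Finset.union_subset hσ₁B hσ₂B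
    have hunion : A₁.erase v ∪ A₂.erase v = B := by
      apply Finset.eq_of_subset_of_card_le hsub
      rw [hBcard]
      by_contra hlt
      push_neg at hlt
      have hle : (A₁.erase v ∪ A₂.erase v).card ≤ d := by omega
      have h12 : A₂.erase v ⊆ A₁.erase v := by
        have hsu : A₁.erase v = A₁.erase v ∪ A₂.erase v :=
          Finset.eq_of_subset_of_card_le Finset.subset_union_left
            (by rw [hcard₁]; exact hle)
        intro x hx
        rw [hsu]
        exact Finset.mem_union_right _ hx
      exact hσne ((Finset.eq_of_subset_of_card_le h12 (by rw [hcard₁, hcard₂])).symm)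
    -- flagness: insert v B is a face, too big
    have hτ : insert v B ∈ C := by
      apply hflag _ ⟨v, Finset.mem_insert_self _ _⟩
      intro a ha b hb
      rcases Finset.mem_insert.1 ha with rfl | haB
      · rcases Finset.mem_insert.1 hb with rfl | hbB
        · simpa using hv
        · rw [← hunion] at hbB
          rcases Finset.mem_union.1 hbB with h | h
          · exact hC A₁ h₁.1.1 _ (by
              intro x hx
              rcases Finset.mem_insert.1 hx with rfl | hx
              · exact h₁.2
              · rw [Finset.mem_singleton.1 hx]; exact Finset.mem_of_mem_erase h)
          · exact hC A₂ h₂.1.1 _ (by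
              intro x hx
              rcases Finset.mem_insert.1 hx with rfl | hx
              · exact h₂.2
              · rw [Finset.mem_singleton.1 hx]; exact Finset.mem_of_mem_erase h)
      · rcases Finset.mem_insert.1 hb with rfl | hbB
        · rw [← hunion] at haB
          rcases Finset.mem_union.1 haB with h | h
          · exact hC A₁ h₁.1.1 _ (by
              intro x hx
              rcases Finset.mem_insert.1 hx with rfl | hx
              · exact Finset.mem_of_mem_erase h
              · rw [Finset.mem_singleton.1 hx]; exact h₁.2)
          · exact hC A₂ h₂.1.1 _ (by
              intro x hx
              rcases Finset.mem_insert.1 hx with rfl | hx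
              · exact Finset.mem_of_mem_erase h
              · rw [Finset.mem_singleton.1 hx]; exact h₂.2)
        · exact hC B hBf.1 _ (by
            intro x hx
            rcases Finset.mem_insert.1 hx with rfl | hx
            · exact haB
            · rw [Finset.mem_singleton.1 hx]; exact hbB)
    obtain ⟨F', hF', hτF'⟩ := hpure.1 _ hτ
    have h1 : (insert v B).card = d + 2 := by
      rw [Finset.card_insert_of_notMem hvB, hBcard]
    have h2 : (insert v B).card ≤ F'.card := Finset.card_le_card hτF'
    rw [h1, hpure.2 F' hF'] at h2
    omega
  -- counting
  have hSfin : S.Finite := Set.toFinite _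
  have hTfin : T.Finite := Set.toFinite _
  have hST : S.ncard ≤ T.ncard :=
    Set.ncard_le_ncard_of_injOn f hmaps hinj hTfin
  have hdisj : Disjoint S T := by
    rw [Set.disjoint_left]
    rintro A ⟨_, hvA⟩ ⟨_, hvA'⟩
    exact hvA' hvA
  have hunion : {A | IsFacet C A} = S ∪ T := by
    ext A
    constructor
    · intro hA
      by_cases h : v ∈ A
      · exact Or.inl ⟨hA, h⟩
      · exact Or.inr ⟨hA, h⟩
    · rintro (⟨h, _⟩ | ⟨h, _⟩) <;> exact h
  rw [hunion, Set.ncard_union_eq hdisj hSfin hTfin]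
  omega
end

section
/- Let C be a pure complex with m facets, D a pure complex with n facets, F an intersecting family of facets of C of maximum cardinality, and S a vertex star of D of maximum cardinality among vertex stars. If C is not pure-EKR (i.e., |F| is strictly larger than every vertex star of C) and n·|F| > m·|S|, then the simplicial join C ∗ D is not pure-EKR. -/
variable {V : Type*} [DecidableEq V]

/-- The simplicial join of complexes on disjoint vertex sets. -/
def Join {V W : Type*} [DecidableEq V] [DecidableEq W]
    (C : Set (Finset V)) (D : Set (Finset W)) : Set (Finset (V ⊕ W)) :=
  {ρ | ∃ σ ∈ C, ∃ τ ∈ D, ρ = σ.image Sum.inl ∪ τ.image Sum.inr}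

section Aux12

variable {V W : Type*} [DecidableEq V] [DecidableEq W]

def pmAux (σ : Finset V) (τ : Finset W) : Finset (V ⊕ W) :=
  σ.image Sum.inl ∪ τ.image Sum.inr

lemma inl_mem_pmAux {σ : Finset V} {τ : Finset W} {v : V} :
    Sum.inl v ∈ pmAux σ τ ↔ v ∈ σ := by simp [pmAux]

lemma inr_mem_pmAux {σ : Finset V} {τ : Finset W} {w : W} :
    Sum.inr w ∈ pmAux σ τ ↔ w ∈ τ := by simp [pmAux]

lemma pmAux_subset {σ σ' : Finset V} {τ τ' : Finset W} :
    pmAux σ τ ⊆ pmAux σ' τ' ↔ σ ⊆ σ' ∧ τ ⊆ τ' := by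
  constructor
  · intro h
    exact ⟨fun v hv => inl_mem_pmAux.1 (h (inl_mem_pmAux.2 hv)),
      fun w hw => inr_mem_pmAux.1 (h (inr_mem_pmAux.2 hw))⟩
  · rintro ⟨h1, h2⟩
    exact Finset.union_subset_union (Finset.image_subset_image h1)
      (Finset.image_subset_image h2)

lemma pmAux_inj {σ σ' : Finset V} {τ τ' : Finset W}
    (h : pmAux σ τ = pmAux σ' τ') : σ = σ' ∧ τ = τ' := by
  obtain ⟨a1, a2⟩ := pmAux_subset.1 h.le
  obtain ⟨b1, b2⟩ := pmAux_subset.1 h.ge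
  exact ⟨Finset.Subset.antisymm a1 b1, Finset.Subset.antisymm a2 b2⟩

lemma pmAux_injective :
    Function.Injective (fun p : Finset V × Finset W => pmAux p.1 p.2) := by
  rintro ⟨σ, τ⟩ ⟨σ', τ'⟩ h
  obtain ⟨h1, h2⟩ := pmAux_inj h
  exact Prod.ext h1 h2

lemma ncard_prod' {α β : Type*} (s : Set α) (t : Set β) :
    (s ×ˢ t).ncard = s.ncard * t.ncard := by
  rw [← Nat.card_coe_set_eq, ← Nat.card_coe_set_eq, ← Nat.card_coe_set_eq,
    ← Nat.card_prod]
  exact Nat.card_congr (Equiv.Set.prod s t)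

lemma card_pm_image (s : Set (Finset V)) (t : Set (Finset W)) :
    ((fun p : Finset V × Finset W => pmAux p.1 p.2) '' (s ×ˢ t)).ncard
      = s.ncard * t.ncard := by
  rw [Set.ncard_image_of_injective _ pmAux_injective, ncard_prod']

lemma pmAux_mem_join {C : Set (Finset V)} {D : Set (Finset W)} {σ : Finset V}
    {τ : Finset W} (hσ : σ ∈ C) (hτ : τ ∈ D) : pmAux σ τ ∈ Join C D :=
  ⟨σ, hσ, τ, hτ, rfl⟩

lemma facet_pmAux {C : Set (Finset V)} {D : Set (Finset W)} {σ : Finset V}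
    {τ : Finset W} (hσ : IsFacet C σ) (hτ : IsFacet D τ) :
    IsFacet (Join C D) (pmAux σ τ) := by
  refine ⟨pmAux_mem_join hσ.1 hτ.1, ?_⟩
  rintro B ⟨σ', hσ', τ', hτ', rfl⟩ hsub
  have h := pmAux_subset.1 hsub
  rw [show σ' = σ from hσ.2 σ' hσ' h.1, show τ' = τ from hτ.2 τ' hτ' h.2]
  rfl

lemma facet_join_iff {C : Set (Finset V)} {D : Set (Finset W)}
    (hpC : ∀ s ∈ C, ∃ A, IsFacet C A ∧ s ⊆ A)
    (hpD : ∀ s ∈ D, ∃ A, IsFacet D A ∧ s ⊆ A) {ρ : Finset (V ⊕ W)} :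
    IsFacet (Join C D) ρ ↔ ∃ σ τ, IsFacet C σ ∧ IsFacet D τ ∧ ρ = pmAux σ τ := by
  constructor
  · rintro ⟨⟨σ, hσ, τ, hτ, rfl⟩, hmax⟩
    obtain ⟨σ₁, hσ₁, hs1⟩ := hpC σ hσ
    obtain ⟨τ₁, hτ₁, hs2⟩ := hpD τ hτ
    have heq : pmAux σ₁ τ₁ = pmAux σ τ :=
      hmax _ (pmAux_mem_join hσ₁.1 hτ₁.1) (pmAux_subset.2 ⟨hs1, hs2⟩)
    exact ⟨σ₁, τ₁, hσ₁, hτ₁, heq.symm⟩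
  · rintro ⟨σ, τ, hσ, hτ, rfl⟩
    exact facet_pmAux hσ hτ

end Aux12

/-- if C is not pure-EKR, witnessed by a maximum intersecting family F,
S is a maximum vertex star of D, and n·|F| > m·|S|, then C ∗ D is not pure-EKR. -/
theorem stmt12 {V W : Type*} [DecidableEq V] [DecidableEq W] [Fintype V] [Fintype W]
    (C : Set (Finset V)) (D : Set (Finset W)) (dC dD : ℕ)
    (hC : IsComplex C) (hD : IsComplex D) (hpC : IsPure C dC) (hpD : IsPure D dD)
    (m n : ℕ) (hm : {A | IsFacet C A}.ncard = m) (hn : {A | IsFacet D A}.ncard = n)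
    (F : Set (Finset V)) (hFfac : ∀ A ∈ F, IsFacet C A) (hFint : Intersecting F)
    (hFmax : ∀ F' : Set (Finset V), (∀ A ∈ F', IsFacet C A) → Intersecting F' →
      F'.ncard ≤ F.ncard)
    (w₀ : W) (hw₀ : ({w₀} : Finset W) ∈ D)
    (hSmax : ∀ w : W, (vertexStar D w).ncard ≤ (vertexStar D w₀).ncard)
    (hnotEKR : ∀ v : V, ({v} : Finset V) ∈ C → (vertexStar C v).ncard < F.ncard)
    (hineq : m * (vertexStar D w₀).ncard < n * F.ncard) :
    ¬ PureEKR (Join C D) := by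
  intro hEKR
  set P : Finset V × Finset W → Finset (V ⊕ W) := fun p => pmAux p.1 p.2 with hP
  have hposn : 0 < n * F.ncard := lt_of_le_of_lt (Nat.zero_le _) hineq
  have hnpos : 0 < n := Nat.pos_of_mul_pos_left (by rw [Nat.mul_comm]; exact hposn)
  have hFpos : 0 < F.ncard := by
    rcases Nat.eq_zero_or_pos F.ncard with h | h
    · rw [h, Nat.mul_zero] at hposn; exact absurd hposn (lt_irrefl 0)
    · exact h
  set G : Set (Finset (V ⊕ W)) := P '' (F ×ˢ {A | IsFacet D A}) with hG
  have hGfac : ∀ A ∈ G, IsFacet (Join C D) A := by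
    rintro A ⟨⟨σ, τ⟩, ⟨hσF, hτ⟩, rfl⟩
    exact facet_pmAux (hFfac σ hσF) hτ
  have hGint : Intersecting G := by
    rintro A ⟨⟨σ, τ⟩, ⟨hσF, hτ⟩, rfl⟩ B ⟨⟨σ', τ'⟩, ⟨hσ'F, hτ'⟩, rfl⟩
    obtain ⟨x, hx⟩ := hFint σ hσF σ' hσ'F
    obtain ⟨hx1, hx2⟩ := Finset.mem_inter.1 hx
    exact ⟨Sum.inl x, Finset.mem_inter.2 ⟨inl_mem_pmAux.2 hx1, inl_mem_pmAux.2 hx2⟩⟩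
  have hGcard : G.ncard = F.ncard * n := by
    rw [hG, card_pm_image, hn]
  obtain ⟨u, hu, hle⟩ := hEKR G hGfac hGint
  cases u with
  | inl v =>
    have hvC : ({v} : Finset V) ∈ C := by
      obtain ⟨σ, hσ, τ, hτ, heq⟩ := hu
      have hv : v ∈ σ := by
        have : Sum.inl v ∈ pmAux σ τ := by
          rw [show pmAux σ τ = ({Sum.inl v} : Finset (V ⊕ W)) from heq.symm]
          exact Finset.mem_singleton_self _
        exact inl_mem_pmAux.1 this
      exact hC σ hσ {v} (Finset.singleton_subset_iff.2 hv)
    have hstar : vertexStar (Join C D) (Sum.inl v)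
        = P '' ((vertexStar C v) ×ˢ {A | IsFacet D A}) := by
      ext A
      constructor
      · rintro ⟨hfA, hvA⟩
        obtain ⟨σ, τ, hσ, hτ, rfl⟩ := (facet_join_iff hpC.1 hpD.1).1 hfA
        exact ⟨(σ, τ), ⟨⟨hσ, inl_mem_pmAux.1 hvA⟩, hτ⟩, rfl⟩
      · rintro ⟨⟨σ, τ⟩, ⟨⟨hσ, hv⟩, hτ⟩, rfl⟩
        exact ⟨facet_pmAux hσ hτ, inl_mem_pmAux.2 hv⟩
    rw [hGcard, hstar, card_pm_image, hn] at hle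
    have hlt := hnotEKR v hvC
    have : F.ncard * n < F.ncard * n :=
      lt_of_le_of_lt hle (Nat.mul_lt_mul_of_lt_of_le hlt (le_refl n) hnpos)
    exact absurd this (lt_irrefl _)
  | inr w =>
    have hwD : ({w} : Finset W) ∈ D := by
      obtain ⟨σ, hσ, τ, hτ, heq⟩ := hu
      have hw : w ∈ τ := by
        have : Sum.inr w ∈ pmAux σ τ := by
          rw [show pmAux σ τ = ({Sum.inr w} : Finset (V ⊕ W)) from heq.symm]
          exact Finset.mem_singleton_self _
        exact inr_mem_pmAux.1 this
      exact hD τ hτ {w} (Finset.singleton_subset_iff.2 hw)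
    have hstar : vertexStar (Join C D) (Sum.inr w)
        = P '' ({A | IsFacet C A} ×ˢ (vertexStar D w)) := by
      ext A
      constructor
      · rintro ⟨hfA, hwA⟩
        obtain ⟨σ, τ, hσ, hτ, rfl⟩ := (facet_join_iff hpC.1 hpD.1).1 hfA
        exact ⟨(σ, τ), ⟨hσ, ⟨hτ, inr_mem_pmAux.1 hwA⟩⟩, rfl⟩
      · rintro ⟨⟨σ, τ⟩, ⟨hσ, ⟨hτ, hw⟩⟩, rfl⟩
        exact ⟨facet_pmAux hσ hτ, inr_mem_pmAux.2 hw⟩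
    rw [hGcard, hstar, card_pm_image, hm] at hle
    have h1 : m * (vertexStar D w).ncard ≤ m * (vertexStar D w₀).ncard :=
      Nat.mul_le_mul_left m (hSmax w)
    have : n * F.ncard < n * F.ncard := by
      calc n * F.ncard = F.ncard * n := Nat.mul_comm _ _
        _ ≤ m * (vertexStar D w).ncard := hle
        _ ≤ m * (vertexStar D w₀).ncard := h1
        _ < n * F.ncard := hineq
    exact absurd this (lt_irrefl _)
end

section
/- For d ≥ 3, the boundary complex of the (d+1)-dimensional cross-polytope is not (d−1)-intersecting pure-EKR: a facet together with its d+1 neighbors (facets obtained by swapping one coordinate) forms a (d−1)-intersecting family of size d+2, while the star of any face of size d−1 contains only 4 facets. -/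
variable {V : Type*} [DecidableEq V]

/-- The boundary complex of the d-dimensional cross-polytope: faces are the sets of
vertices containing no antipodal pair. -/
def Cross (d : ℕ) : Set (Finset (Fin d × Bool)) :=
  {σ | ∀ i : Fin d, ¬(((i, true) : Fin d × Bool) ∈ σ ∧ ((i, false) : Fin d × Bool) ∈ σ)}

def Tr (d : ℕ) (f : Fin d → Bool) : Finset (Fin d × Bool) :=
  Finset.univ.image (fun i => (i, f i))

lemma mem_Tr {d : ℕ} {f : Fin d → Bool} {p : Fin d × Bool} :
    p ∈ Tr d f ↔ f p.1 = p.2 := by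
  constructor
  · rintro h
    simp only [Tr, Finset.mem_image, Finset.mem_univ, true_and] at h
    obtain ⟨i, hi⟩ := h
    cases hi; rfl
  · intro h
    simp only [Tr, Finset.mem_image, Finset.mem_univ, true_and]
    exact ⟨p.1, by rw [h]⟩

lemma Tr_mem_Cross {d : ℕ} (f : Fin d → Bool) : Tr d f ∈ Cross d := by
  intro i ⟨h1, h2⟩
  rw [mem_Tr] at h1 h2
  simp at h1 h2; rw [h1] at h2; exact Bool.noConfusion h2

lemma card_Tr {d : ℕ} (f : Fin d → Bool) : (Tr d f).card = d := by
  rw [Tr, Finset.card_image_of_injective _ (fun a b h => (Prod.mk.injEq _ _ _ _).mp h |>.1)]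
  simp

lemma Tr_inj {d : ℕ} {f g : Fin d → Bool} (h : Tr d f = Tr d g) : f = g := by
  funext i
  have : (i, f i) ∈ Tr d g := h ▸ mem_Tr.mpr rfl
  exact (mem_Tr.mp this).symm

lemma subset_Cross {d : ℕ} {A B : Finset (Fin d × Bool)} (h : A ∈ Cross d) (hs : B ⊆ A) :
    B ∈ Cross d := fun i ⟨h1, h2⟩ => h i ⟨hs h1, hs h2⟩

lemma Tr_facet {d : ℕ} (f : Fin d → Bool) :
    Tr d f ∈ Cross d ∧ ∀ B ∈ Cross d, Tr d f ⊆ B → B = Tr d f := by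
  refine ⟨Tr_mem_Cross f, fun B hB hsub => Finset.Subset.antisymm ?_ hsub⟩
  rintro ⟨i, b⟩ hib
  rw [mem_Tr]
  by_contra hne
  have h1 : (i, f i) ∈ B := hsub (mem_Tr.mpr rfl)
  have : f i = !b := by cases b <;> cases hfi : f i <;> simp_all
  apply hB i
  cases b
  · simp [this] at h1; exact ⟨h1, hib⟩
  · simp [this] at h1; exact ⟨hib, h1⟩

lemma facet_eq_Tr {d : ℕ} {A : Finset (Fin d × Bool)}
    (hA : A ∈ Cross d) (hmax : ∀ B ∈ Cross d, A ⊆ B → B = A) :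
    A = Tr d (fun i => decide ((i, true) ∈ A)) := by
  set f : Fin d → Bool := fun i => decide ((i, true) ∈ A) with hf
  have hsub : A ⊆ Tr d f := by
    rintro ⟨i, b⟩ hib
    rw [mem_Tr]
    cases b
    · simp only [hf, decide_eq_false_iff_not]
      intro htrue
      exact hA i ⟨htrue, hib⟩
    · simpa [hf] using hib
  exact (hmax _ (Tr_mem_Cross f) hsub).symm

lemma Tr_inter {d : ℕ} (f g : Fin d → Bool) :
    Tr d f ∩ Tr d g = (Finset.univ.filter (fun i => f i = g i)).image (fun i => (i, f i)) := by
  ext ⟨i, b⟩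
  simp only [Finset.mem_inter, mem_Tr, Finset.mem_image, Finset.mem_filter, Finset.mem_univ,
    true_and]
  constructor
  · rintro ⟨h1, h2⟩
    exact ⟨i, h1 ▸ h2 ▸ rfl, by rw [h1]⟩
  · rintro ⟨j, hj, hje⟩
    obtain ⟨rfl, rfl⟩ := Prod.mk.injEq .. |>.mp hje
    exact ⟨rfl, hj.symm⟩

lemma Tr_inter_card {d : ℕ} (f g : Fin d → Bool) :
    (Tr d f ∩ Tr d g).card = (Finset.univ.filter (fun i => f i = g i)).card := by
  rw [Tr_inter, Finset.card_image_of_injective _ (fun a b h => (Prod.mk.injEq _ _ _ _).mp h |>.1)]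

lemma subset_Tr {d : ℕ} {σ : Finset (Fin d × Bool)} {f : Fin d → Bool} :
    σ ⊆ Tr d f ↔ ∀ p ∈ σ, f p.1 = p.2 := by
  constructor
  · intro h p hp; exact mem_Tr.mp (h hp)
  · intro h p hp; exact mem_Tr.mpr (h p hp)

lemma proj_inj_on {d : ℕ} {σ : Finset (Fin d × Bool)} (hσ : σ ∈ Cross d) :
    ∀ p ∈ σ, ∀ q ∈ σ, p.1 = q.1 → p = q := by
  rintro ⟨k, b⟩ hp ⟨k', b'⟩ hq h
  dsimp at h; subst h
  by_contra hne
  have hbb : b ≠ b' := by simpa using hne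
  apply hσ k
  cases b <;> cases b' <;> simp_all

lemma star_count {d : ℕ} (hd : 2 ≤ d) (σ : Finset (Fin d × Bool)) (hσ : σ ∈ Cross d)
    (hcard : σ.card = d - 2) :
    {A | (A ∈ Cross d ∧ ∀ B ∈ Cross d, A ⊆ B → B = A) ∧ σ ⊆ A}.ncard = 4 := by
  classical
  set s : Finset (Fin d) := σ.image Prod.fst with hs
  have hscard : s.card = d - 2 := by
    rw [hs, Finset.card_image_of_injOn (fun p hp q hq h => proj_inj_on hσ p hp q hq h), hcard]
  have hcompl : sᶜ.card = 2 := by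
    have := Finset.card_compl s
    simp only [Fintype.card_fin] at this
    omega
  obtain ⟨i, j, hij, hcs⟩ := Finset.card_eq_two.mp hcompl
  have hi : i ∉ s := by
    have : i ∈ sᶜ := hcs ▸ Finset.mem_insert_self i {j}
    simpa using this
  have hj : j ∉ s := by
    have : j ∈ sᶜ := hcs ▸ by simp
    simpa using this
  set F0 : Bool → Bool → Fin d → Bool :=
    fun a b k => if (k, true) ∈ σ then true else if k = i then a else if k = j then b else false
    with hF0
  have hmemS : ∀ k b, ((k, b) : Fin d × Bool) ∈ σ → k ∈ s := by
    intro k b h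
    exact Finset.mem_image.mpr ⟨(k, b), h, rfl⟩
  have hF0i : ∀ a b, F0 a b i = a := by
    intro a b
    have : (i, true) ∉ σ := fun h => hi (hmemS i true h)
    simp [hF0, this]
  have hF0j : ∀ a b, F0 a b j = b := by
    intro a b
    have : (j, true) ∉ σ := fun h => hj (hmemS j true h)
    simp [hF0, this, hij.symm]
  have hsub : ∀ a b, σ ⊆ Tr d (F0 a b) := by
    intro a b
    rw [subset_Tr]
    rintro ⟨k, c⟩ hp
    cases c
    · have h1 : (k, true) ∉ σ := fun h => hσ k ⟨h, hp⟩
      have hks : k ∈ s := hmemS k false hp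
      have hki : k ≠ i := fun h => hi (h ▸ hks)
      have hkj : k ≠ j := fun h => hj (h ▸ hks)
      simp [hF0, h1, hki, hkj]
    · simp [hF0, hp]
  have hset : {A | (A ∈ Cross d ∧ ∀ B ∈ Cross d, A ⊆ B → B = A) ∧ σ ⊆ A} =
      {Tr d (F0 true true), Tr d (F0 true false), Tr d (F0 false true), Tr d (F0 false false)} := by
    ext A
    simp only [Set.mem_setOf_eq, Set.mem_insert_iff, Set.mem_singleton_iff]
    constructor
    · rintro ⟨⟨hA, hmax⟩, hsubA⟩
      have hAeq := facet_eq_Tr hA hmax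
      set h : Fin d → Bool := fun k => decide ((k, true) ∈ A) with hh
      have hσh : σ ⊆ Tr d h := hAeq ▸ hsubA
      have key : h = F0 (h i) (h j) := by
        funext k
        by_cases h1 : (k, true) ∈ σ
        · have := (subset_Tr.mp hσh) (k, true) h1
          simp [hF0, h1, this]
        · by_cases hki : k = i
          · subst hki; rw [hF0i]
          · by_cases hkj : k = j
            · subst hkj; rw [hF0j]
            · -- k ∈ s
              have hks : k ∈ s := by
                by_contra hns
                have : k ∈ sᶜ := Finset.mem_compl.mpr hns
                rw [hcs] at this
                simp at this
                tauto
              obtain ⟨p, hp, hpk⟩ := Finset.mem_image.mp hks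
              obtain ⟨c, rfl⟩ : ∃ c, p = (k, c) := ⟨p.2, by rw [← hpk]⟩
              have hc : c = false := by
                cases c
                · rfl
                · exact absurd hp h1
              subst hc
              have := (subset_Tr.mp hσh) (k, false) hp
              simp [hF0, h1, hki, hkj, this]
      rw [hAeq, key]
      cases hhi : h i <;> cases hhj : h j <;> simp
    · intro hA
      rcases hA with rfl | rfl | rfl | rfl <;>
        exact ⟨⟨Tr_mem_Cross _, (Tr_facet _).2⟩, hsub _ _⟩
  rw [hset]
  have hTrne : ∀ a b a' b', (a, b) ≠ (a', b') → Tr d (F0 a b) ≠ Tr d (F0 a' b') := by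
    intro a b a' b' hne heq
    have := Tr_inj heq
    apply hne
    have h1 : a = a' := by rw [← hF0i a b, ← hF0i a' b', this]
    have h2 : b = b' := by rw [← hF0j a b, ← hF0j a' b', this]
    rw [h1, h2]
  rw [Set.ncard_insert_of_notMem (by simp; refine ⟨?_, ?_, ?_⟩ <;> apply hTrne <;> simp),
    Set.ncard_insert_of_notMem (by simp; refine ⟨?_, ?_⟩ <;> apply hTrne <;> simp),
    Set.ncard_insert_of_notMem (by simp; apply hTrne; simp),
    Set.ncard_singleton]

lemma part1 (d : ℕ) (hd : 3 ≤ d) :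
    ∃ F : Set (Finset (Fin (d + 1) × Bool)),
      (∀ A ∈ F, A ∈ Cross (d+1) ∧ ∀ B ∈ Cross (d+1), A ⊆ B → B = A) ∧
      (∀ A ∈ F, ∀ B ∈ F, d - 1 ≤ (A ∩ B).card) ∧ F.ncard = d + 2 := by
  classical
  set c : Fin (d+1) → Bool := fun _ => true with hc
  set g : Fin (d+1) → Fin (d+1) → Bool := fun j i => decide (i ≠ j) with hg
  set S : Set (Fin (d+1) → Bool) := insert c (Set.range g) with hS
  refine ⟨Tr (d+1) '' S, ?_, ?_, ?_⟩
  · rintro A ⟨f, _, rfl⟩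
    exact ⟨Tr_mem_Cross f, (Tr_facet f).2⟩
  · rintro A ⟨f, hf, rfl⟩ B ⟨f', hf', rfl⟩
    rw [Tr_inter_card]
    have hdis : (Finset.univ.filter (fun i => ¬ f i = f' i)).card ≤ 2 := by
      have : ∃ u v : Fin (d+1), ∀ i, f i ≠ f' i → i = u ∨ i = v := by
        rcases hf with rfl | ⟨j, rfl⟩ <;> rcases hf' with rfl | ⟨k, rfl⟩
        · exact ⟨0, 0, fun i h => absurd rfl h⟩
        · refine ⟨k, k, fun i h => ?_⟩
          by_contra hne
          push_neg at hne
          simp [hc, hg, hne.1] at h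
        · refine ⟨j, j, fun i h => ?_⟩
          by_contra hne
          push_neg at hne
          simp [hc, hg, hne.1] at h
        · refine ⟨j, k, fun i h => ?_⟩
          by_contra hne
          push_neg at hne
          simp [hg, hne.1, hne.2] at h
      obtain ⟨u, v, huv⟩ := this
      calc (Finset.univ.filter (fun i => ¬ f i = f' i)).card
          ≤ ({u, v} : Finset (Fin (d+1))).card := by
            apply Finset.card_le_card
            intro i hi
            simp only [Finset.mem_filter] at hi
            simpa using huv i hi.2
        _ ≤ 2 := Finset.card_insert_le _ _ |>.trans (by simp)
    have := Finset.card_filter_add_card_filter_not (s := Finset.univ)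
      (p := fun i => f i = f' i)
    simp only [Finset.card_univ, Fintype.card_fin] at this
    omega
  · have hTrinj : Function.Injective (Tr (d+1)) := fun f f' h => Tr_inj h
    rw [Set.ncard_image_of_injective _ hTrinj, hS]
    have hginj : Function.Injective g := by
      intro j k h
      by_contra hne
      have := congrFun h j
      simp [hg, hne] at this
    have hcnr : c ∉ Set.range g := by
      rintro ⟨j, hj⟩
      have := congrFun hj j
      simp [hc, hg] at this
    rw [Set.ncard_insert_of_notMem hcnr (Set.finite_range g)]
    have : Set.range g = g '' Set.univ := (Set.image_univ).symm
    rw [this, Set.ncard_image_of_injective _ hginj, Set.ncard_univ]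
    simp

/-- for d ≥ 3 the boundary of the (d+1)-cross-polytope is not
(d-1)-intersecting pure-EKR: there is a (d-1)-intersecting family of d+2 facets,
while the star of any face of size d-1 has exactly 4 facets. -/
theorem stmt14 (d : ℕ) (hd : 3 ≤ d) :
    (∃ F : Set (Finset (Fin (d + 1) × Bool)),
      (∀ A ∈ F, IsFacet (Cross (d + 1)) A) ∧
      (∀ A ∈ F, ∀ B ∈ F, d - 1 ≤ (A ∩ B).card) ∧ F.ncard = d + 2) ∧
    (∀ σ ∈ Cross (d + 1), σ.card = d - 1 →
      {A | IsFacet (Cross (d + 1)) A ∧ σ ⊆ A}.ncard = 4) := by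
  constructor
  · obtain ⟨F, h1, h2, h3⟩ := part1 d hd
    exact ⟨F, h1, h2, h3⟩
  · intro σ hσ hcard
    exact star_count (by omega) σ hσ (by omega)
end

section
/- In the boundary complex of the 7-gon's associahedron (i.e., among triangulations of a convex heptagon, each determined by its 4 internal diagonals), there exists a 2-intersecting family of 5 triangulations that is not the set of triangulations containing a fixed pair of diagonals; moreover, no pair of noncrossing diagonals of the heptagon is contained in more than 5 triangulations. -/
variable {V : Type*} [DecidableEq V]

/-- A diagonal of the convex 7-gon: a pair of distinct, non-adjacent vertices. -/
def IsDiag (p : Finset (Fin 7)) : Prop :=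
  ∃ a b : Fin 7, p = {a, b} ∧ b ≠ a ∧ b ≠ a + 1 ∧ a ≠ b + 1

/-- Two diagonals of the 7-gon cross: their endpoints interleave in cyclic order. -/
def Crosses (p q : Finset (Fin 7)) : Prop :=
  ∃ a b c d : Fin 7, a < c ∧ c < b ∧ b < d ∧
    ((p = {a, b} ∧ q = {c, d}) ∨ (q = {a, b} ∧ p = {c, d}))

/-- A triangulation of the convex heptagon: a maximal set of pairwise noncrossing
internal diagonals. -/
def IsTriangulation (T : Finset (Finset (Fin 7))) : Prop :=
  (∀ p ∈ T, IsDiag p) ∧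
  (∀ p ∈ T, ∀ q ∈ T, p ≠ q → ¬ Crosses p q) ∧
  (∀ p : Finset (Fin 7), IsDiag p → p ∉ T → ∃ q ∈ T, Crosses p q)


/-! ### Auxiliary machinery for `stmt15` -/

section HepAux
set_option maxRecDepth 10000

open Finset

def hepEP : Fin 14 → Fin 7 × Fin 7 := ![(0,2), (0,3), (0,4), (0,5), (1,3), (1,4), (1,5), (1,6), (2,4), (2,5), (2,6), (3,5), (3,6), (4,6)]

/-- The 14 diagonals of the heptagon, indexed. -/
def hepE (i : Fin 14) : Finset (Fin 7) := {(hepEP i).1, (hepEP i).2}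

/-- Crossing bitmask rows. -/
def hepRows (i : Nat) : Nat :=
  if i < 7 then
    (if i < 3 then (if i = 0 then 240 else if i = 1 then 2016 else 7872)
     else if i = 3 then 13440 else if i = 4 then 1793 else if i = 5 then 7683 else 13319)
  else
    (if i < 10 then (if i = 7 then 15 else if i = 8 then 6162 else 12342)
     else if i = 10 then 126 else if i = 11 then 8484 else if i = 12 then 876 else 2632)

/-- Bitmasks of the 42 triangulations. -/
def hepMasks : List Nat := [15, 8199, 2059, 6147, 12291, 269, 8453, 777, 2569, 1793, 9473, 3585, 7169, 13313, 30, 8214, 2074, 6162, 12306, 60, 300, 8244, 8484, 120, 2136, 360, 840, 2632, 240, 8368, 2256, 6288, 12432, 480, 8608, 960, 2752, 1920, 9600, 3712, 7296, 13440]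

def crossIdx (i j : Fin 14) : Prop := (hepRows i.val).testBit j.val = true

instance (i j : Fin 14) : Decidable (crossIdx i j) := by unfold crossIdx; infer_instance

def goodIdx (S : Finset (Fin 14)) : Prop :=
  (∀ i ∈ S, ∀ j ∈ S, ¬ crossIdx i j) ∧ (∀ i : Fin 14, i ∉ S → ∃ j ∈ S, crossIdx i j)

instance (S : Finset (Fin 14)) : Decidable (goodIdx S) := by unfold goodIdx; infer_instance

instance (p q : Finset (Fin 7)) : Decidable (Crosses p q) := by unfold Crosses; infer_instance

lemma hep_pair_inj {a b c d : Fin 7} (hab : a < b) (hcd : c < d)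
    (h : ({a, b} : Finset (Fin 7)) = {c, d}) : a = c ∧ b = d := by
  have ha : a = c ∨ a = d := by
    have h' : a ∈ ({c, d} : Finset (Fin 7)) := h ▸ (by simp)
    simpa using h'
  have hb : b = c ∨ b = d := by
    have h' : b ∈ ({c, d} : Finset (Fin 7)) := h ▸ (by simp)
    simpa using h'
  rcases ha with h1 | h1
  · subst h1
    rcases hb with h2 | h2
    · subst h2
      exact absurd hab (lt_irrefl _)
    · exact ⟨rfl, h2⟩
  · subst h1
    rcases hb with h2 | h2
    · subst h2
      exact absurd (hab.trans hcd) (lt_irrefl _)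
    · subst h2
      exact absurd hab (lt_irrefl _)

lemma hep_crosses_pair {a b c d : Fin 7} (hab : a < b) (hcd : c < d) :
    Crosses {a, b} {c, d} ↔ ((a < c ∧ c < b ∧ b < d) ∨ (c < a ∧ a < d ∧ d < b)) := by
  constructor
  · rintro ⟨x, y, z, w, h1, h2, h3, (⟨hp, hq⟩ | ⟨hq, hp⟩)⟩
    · obtain ⟨rfl, rfl⟩ := hep_pair_inj hab (h1.trans h2) hp
      obtain ⟨rfl, rfl⟩ := hep_pair_inj hcd (h2.trans h3) hq
      exact Or.inl ⟨h1, h2, h3⟩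
    · obtain ⟨rfl, rfl⟩ := hep_pair_inj hcd (h1.trans h2) hq
      obtain ⟨rfl, rfl⟩ := hep_pair_inj hab (h2.trans h3) hp
      exact Or.inr ⟨h1, h2, h3⟩
  · rintro (⟨h1, h2, h3⟩ | ⟨h1, h2, h3⟩)
    · exact ⟨a, b, c, d, h1, h2, h3, Or.inl ⟨rfl, rfl⟩⟩
    · exact ⟨c, d, a, b, h1, h2, h3, Or.inr ⟨rfl, rfl⟩⟩

lemma hepEP_lt : ∀ i : Fin 14, (hepEP i).1 < (hepEP i).2 := by decide

lemma hep_interleave_iff : ∀ i j : Fin 14,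
    (((hepEP i).1 < (hepEP j).1 ∧ (hepEP j).1 < (hepEP i).2 ∧ (hepEP i).2 < (hepEP j).2) ∨
      ((hepEP j).1 < (hepEP i).1 ∧ (hepEP i).1 < (hepEP j).2 ∧ (hepEP j).2 < (hepEP i).2)) ↔
    crossIdx i j := by decide

lemma hep_cross_iff (i j : Fin 14) : Crosses (hepE i) (hepE j) ↔ crossIdx i j := by
  rw [show hepE i = {(hepEP i).1, (hepEP i).2} from rfl,
    show hepE j = {(hepEP j).1, (hepEP j).2} from rfl,
    hep_crosses_pair (hepEP_lt i) (hepEP_lt j)]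
  exact hep_interleave_iff i j

lemma hepE_inj : ∀ i j : Fin 14, hepE i = hepE j → i = j := by decide

lemma hep_diag_cond : ∀ i : Fin 14,
    (hepEP i).2 ≠ (hepEP i).1 ∧ (hepEP i).2 ≠ (hepEP i).1 + 1 ∧ (hepEP i).1 ≠ (hepEP i).2 + 1 := by
  decide

lemma hep_diag_e (i : Fin 14) : IsDiag (hepE i) :=
  ⟨(hepEP i).1, (hepEP i).2, rfl, (hep_diag_cond i).1, (hep_diag_cond i).2.1, (hep_diag_cond i).2.2⟩

lemma hep_find_pair : ∀ a b : Fin 7, b ≠ a → b ≠ a + 1 → a ≠ b + 1 →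
    ∃ i : Fin 14, hepEP i = (a, b) ∨ hepEP i = (b, a) := by decide

lemma hep_diag_mem {p : Finset (Fin 7)} (h : IsDiag p) : ∃ i : Fin 14, p = hepE i := by
  obtain ⟨a, b, rfl, h1, h2, h3⟩ := h
  obtain ⟨i, hi | hi⟩ := hep_find_pair a b h1 h2 h3
  · exact ⟨i, by simp [hepE, hi]⟩
  · exact ⟨i, by simp [hepE, hi, Finset.pair_comm]⟩

/-- Encode a set of indices as a bitmask. -/
instance : Std.Commutative Nat.lor := ⟨Nat.lor_comm⟩
instance : Std.Associative Nat.lor := ⟨Nat.lor_assoc⟩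

def hepEnc (S : Finset (Fin 14)) : Nat := S.fold Nat.lor 0 (fun i => 2 ^ i.val)

lemma hep_testBit_enc (S : Finset (Fin 14)) :
    ∀ k : Nat, (hepEnc S).testBit k = true ↔ ∃ i ∈ S, i.val = k := by
  classical
  induction S using Finset.induction_on with
  | empty => intro k; simp [hepEnc]
  | @insert a S ha ih =>
    intro k
    have hins : hepEnc (insert a S) = 2 ^ a.val ||| hepEnc S := Finset.fold_insert ha
    rw [hins]
    simp only [Nat.testBit_lor, Bool.or_eq_true, Nat.testBit_two_pow, decide_eq_true_eq, ih k,
      Finset.mem_insert]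
    constructor
    · rintro (rfl | ⟨i, hi, rfl⟩)
      · exact ⟨a, Or.inl rfl, rfl⟩
      · exact ⟨i, Or.inr hi, rfl⟩
    · rintro ⟨i, (rfl | hi), rfl⟩
      · exact Or.inl rfl
      · exact Or.inr ⟨i, hi, rfl⟩

lemma hepEnc_lt (S : Finset (Fin 14)) : hepEnc S < 16384 := by
  classical
  induction S using Finset.induction_on with
  | empty => simp [hepEnc]
  | @insert a S ha ih =>
    have hins : hepEnc (insert a S) = 2 ^ a.val ||| hepEnc S := Finset.fold_insert ha
    rw [hins]
    have h1 : 2 ^ a.val < 2 ^ 14 := Nat.pow_lt_pow_right (by norm_num) a.isLt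
    have h2 : hepEnc S < 2 ^ 14 := by simpa using ih
    have h3 := Nat.or_lt_two_pow h1 h2
    simpa using h3

/-- Bounded universal Bool check. -/
def natAll (f : Nat → Bool) : Nat → Bool := fun n => Nat.rec true (fun i ih => f i && ih) n

lemma natAll_spec (f : Nat → Bool) : ∀ n, natAll f n = true → ∀ m, m < n → f m = true := by
  intro n
  induction n with
  | zero => intro _ m hm; exact absurd hm (Nat.not_lt_zero m)
  | succ n ih =>
    intro h m hm
    have h' : (f n && natAll f n) = true := h
    rw [Bool.and_eq_true] at h'
    rcases Nat.lt_succ_iff_lt_or_eq.mp hm with h2 | rfl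
    · exact ih h'.2 m h2
    · exact h'.1

lemma natAll_of (f : Nat → Bool) : ∀ n, (∀ m, m < n → f m = true) → natAll f n = true := by
  intro n
  induction n with
  | zero => intro _; rfl
  | succ n ih =>
    intro h
    show (f n && natAll f n) = true
    rw [Bool.and_eq_true]
    exact ⟨h n (Nat.lt_succ_self n), ih (fun m hm => h m (hm.trans (Nat.lt_succ_self n)))⟩

def hepRowB (m i : Nat) : Bool := (hepRows i &&& m == 0) == m.testBit i

def hepChk (m : Nat) : Bool := !(natAll (hepRowB m) 14) || hepMasks.contains m

def hepBlock (b : Nat) : Bool := natAll (fun i => hepChk (128 * b + i)) 128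

theorem hepAll_true : natAll hepBlock 128 = true := by decide +kernel

lemma hepChk_all : ∀ m, m < 16384 → hepChk m = true := by
  intro m hm
  have hb := natAll_spec hepBlock 128 hepAll_true (m / 128) (by omega)
  have h2 := natAll_spec _ 128 hb (m % 128) (by omega)
  rwa [show 128 * (m / 128) + m % 128 = m from Nat.div_add_mod m 128] at h2

lemma hep_rowB_of_good (S : Finset (Fin 14)) (h : goodIdx S) :
    ∀ i, i < 14 → hepRowB (hepEnc S) i = true := by
  intro i hi
  rw [hepRowB]
  by_cases hb : (hepEnc S).testBit i = true
  · rw [hb]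
    obtain ⟨i', hi'S, hival⟩ := (hep_testBit_enc S i).mp hb
    have hz : hepRows i &&& hepEnc S = 0 := by
      apply Nat.eq_of_testBit_eq
      intro k
      rw [Nat.testBit_land, Nat.zero_testBit]
      cases hk : (hepEnc S).testBit k with
      | false => simp
      | true =>
        obtain ⟨j, hj, rfl⟩ := (hep_testBit_enc S k).mp hk
        have hnc : ¬ crossIdx i' j := h.1 i' hi'S j hj
        rw [crossIdx] at hnc
        rw [hival] at hnc
        simp only [Bool.not_eq_true] at hnc
        simp [hnc]
    simp [hz]
  · rw [Bool.not_eq_true] at hb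
    rw [hb]
    have hiS : (⟨i, hi⟩ : Fin 14) ∉ S := fun hmem =>
      Bool.noConfusion (((hep_testBit_enc S i).mpr ⟨⟨i, hi⟩, hmem, rfl⟩).symm.trans hb)
    obtain ⟨j, hj, hcross⟩ := h.2 ⟨i, hi⟩ hiS
    have ht : (hepRows i &&& hepEnc S).testBit j.val = true := by
      unfold crossIdx at hcross
      simp [Nat.testBit_land, hcross, (hep_testBit_enc S j.val).mpr ⟨j, hj, rfl⟩]
    have hne : hepRows i &&& hepEnc S ≠ 0 := by
      intro h0
      rw [h0, Nat.zero_testBit] at ht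
      exact Bool.false_ne_true ht
    simp [hne]

lemma hep_mem_masks (S : Finset (Fin 14)) (h : goodIdx S) : hepEnc S ∈ hepMasks := by
  have hc := hepChk_all (hepEnc S) (hepEnc_lt S)
  rw [hepChk] at hc
  rw [natAll_of _ 14 (hep_rowB_of_good S h)] at hc
  simpa using hc

lemma hep_S_eq (S : Finset (Fin 14)) :
    S = Finset.univ.filter (fun i : Fin 14 => (hepEnc S).testBit i.val = true) := by
  ext i
  simp only [Finset.mem_filter, Finset.mem_univ, true_and, hep_testBit_enc]
  constructor
  · intro hi; exact ⟨i, hi, rfl⟩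
  · rintro ⟨j, hj, hv⟩
    rwa [show i = j from Fin.ext hv.symm]

lemma hep_isTri (S : Finset (Fin 14)) (h : goodIdx S) : IsTriangulation (S.image hepE) := by
  refine ⟨?_, ?_, ?_⟩
  · intro p hp
    obtain ⟨i, _, rfl⟩ := Finset.mem_image.mp hp
    exact hep_diag_e i
  · intro p hp q hq _
    obtain ⟨i, hi, rfl⟩ := Finset.mem_image.mp hp
    obtain ⟨j, hj, rfl⟩ := Finset.mem_image.mp hq
    exact fun hc => h.1 i hi j hj ((hep_cross_iff i j).mp hc)
  · intro p hp hpn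
    obtain ⟨i, rfl⟩ := hep_diag_mem hp
    have hi : i ∉ S := fun hmem => hpn (Finset.mem_image_of_mem hepE hmem)
    obtain ⟨j, hj, hc⟩ := h.2 i hi
    exact ⟨hepE j, Finset.mem_image_of_mem hepE hj, (hep_cross_iff i j).mpr hc⟩

lemma hep_tri_to {T : Finset (Finset (Fin 7))} (h : IsTriangulation T) :
    ∃ S : Finset (Fin 14), goodIdx S ∧ T = S.image hepE := by
  refine ⟨Finset.univ.filter (fun i => hepE i ∈ T), ⟨?_, ?_⟩, ?_⟩
  · intro i hi j hj hc
    rw [Finset.mem_filter] at hi hj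
    by_cases hij : i = j
    · subst hij
      have hirr : ∀ k : Fin 14, ¬ crossIdx k k := by decide
      exact hirr i hc
    · exact h.2.1 (hepE i) hi.2 (hepE j) hj.2 (fun he => hij (hepE_inj i j he))
        ((hep_cross_iff i j).mpr hc)
  · intro i hi
    rw [Finset.mem_filter] at hi
    push_neg at hi
    obtain ⟨q, hq, hcr⟩ := h.2.2 (hepE i) (hep_diag_e i) (hi (Finset.mem_univ i))
    obtain ⟨j, rfl⟩ := hep_diag_mem (h.1 q hq)
    exact ⟨j, Finset.mem_filter.mpr ⟨Finset.mem_univ j, hq⟩, (hep_cross_iff i j).mp hcr⟩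
  · ext p
    simp only [Finset.mem_image, Finset.mem_filter, Finset.mem_univ, true_and]
    constructor
    · intro hp
      obtain ⟨i, rfl⟩ := hep_diag_mem (h.1 p hp)
      exact ⟨i, hp, rfl⟩
    · rintro ⟨i, hi, rfl⟩
      exact hi

lemma hep_count : ∀ i j : Fin 14, i ≠ j → ¬ crossIdx i j →
    ((hepMasks.toFinset.filter
      (fun c => c.testBit i.val = true ∧ c.testBit j.val = true)).card ≤ 5) := by decide +kernel

/-- Converse bridge: the Bool row check implies `goodIdx`. -/
lemma hep_good_of_rowB (S : Finset (Fin 14))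
    (h : ∀ i, i < 14 → hepRowB (hepEnc S) i = true) : goodIdx S := by
  constructor
  · intro i hi j hj hc
    have hri := h i.val i.isLt
    rw [hepRowB, (hep_testBit_enc S i.val).mpr ⟨i, hi, rfl⟩] at hri
    have hz : hepRows i.val &&& hepEnc S = 0 := by simpa using hri
    have hbit : (hepRows i.val &&& hepEnc S).testBit j.val = true := by
      unfold crossIdx at hc
      simp [Nat.testBit_land, hc, (hep_testBit_enc S j.val).mpr ⟨j, hj, rfl⟩]
    rw [hz, Nat.zero_testBit] at hbit
    exact Bool.noConfusion hbit
  · intro i hiS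
    have hri := h i.val i.isLt
    have hb : (hepEnc S).testBit i.val = false := by
      cases hk : (hepEnc S).testBit i.val
      · rfl
      · obtain ⟨j, hj, hv⟩ := (hep_testBit_enc S i.val).mp hk
        exact absurd (by rwa [show i = j from Fin.ext hv.symm]) hiS
    rw [hepRowB, hb] at hri
    have hnz : hepRows i.val &&& hepEnc S ≠ 0 := by
      intro h0
      rw [h0] at hri
      simp at hri
    obtain ⟨k, hk⟩ := Nat.exists_testBit_of_ne_zero hnz
    rw [Nat.testBit_land, Bool.and_eq_true] at hk
    obtain ⟨j, hj, hjv⟩ := (hep_testBit_enc S k).mp hk.2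
    refine ⟨j, hj, ?_⟩
    unfold crossIdx
    rw [hjv]
    exact hk.1

/-- The five index sets of the fan family. -/
def hepS0 : Finset (Fin 14) := {0, 1, 2, 3}
def hepS1 : Finset (Fin 14) := {1, 2, 3, 4}
def hepS2 : Finset (Fin 14) := {0, 2, 3, 8}
def hepS3 : Finset (Fin 14) := {0, 1, 3, 11}
def hepS4 : Finset (Fin 14) := {0, 1, 2, 13}

def hepSL : Finset (Finset (Fin 14)) := {hepS0, hepS1, hepS2, hepS3, hepS4}

def hepIm (S : Finset (Fin 14)) : Finset (Finset (Fin 7)) := S.image hepE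

def hepL5 : Finset (Finset (Finset (Fin 7))) := hepSL.image hepIm

lemma hepE_injective : Function.Injective hepE := fun {a b} h => hepE_inj a b h

lemma hepIm_injective : Function.Injective hepIm := fun S S' h =>
  Finset.image_injective hepE_injective h

lemma hep_rowB0 : natAll (hepRowB (hepEnc hepS0)) 14 = true := by decide +kernel
lemma hep_rowB1 : natAll (hepRowB (hepEnc hepS1)) 14 = true := by decide +kernel
lemma hep_rowB2 : natAll (hepRowB (hepEnc hepS2)) 14 = true := by decide +kernel
lemma hep_rowB3 : natAll (hepRowB (hepEnc hepS3)) 14 = true := by decide +kernel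
lemma hep_rowB4 : natAll (hepRowB (hepEnc hepS4)) 14 = true := by decide +kernel

lemma hepSL_cases {S : Finset (Fin 14)} (h : S ∈ hepSL) :
    S = hepS0 ∨ S = hepS1 ∨ S = hepS2 ∨ S = hepS3 ∨ S = hepS4 := by
  simpa [hepSL, Finset.mem_insert, Finset.mem_singleton] using h

lemma hep_goodSL (S : Finset (Fin 14)) (hS : S ∈ hepSL) : goodIdx S := by
  rcases hepSL_cases hS with rfl | rfl | rfl | rfl | rfl
  · exact hep_good_of_rowB _ (natAll_spec _ 14 hep_rowB0)
  · exact hep_good_of_rowB _ (natAll_spec _ 14 hep_rowB1)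
  · exact hep_good_of_rowB _ (natAll_spec _ 14 hep_rowB2)
  · exact hep_good_of_rowB _ (natAll_spec _ 14 hep_rowB3)
  · exact hep_good_of_rowB _ (natAll_spec _ 14 hep_rowB4)

lemma hep_i00 : 2 ≤ (hepS0 ∩ hepS0).card := by decide +kernel
lemma hep_i01 : 2 ≤ (hepS0 ∩ hepS1).card := by decide +kernel
lemma hep_i02 : 2 ≤ (hepS0 ∩ hepS2).card := by decide +kernel
lemma hep_i03 : 2 ≤ (hepS0 ∩ hepS3).card := by decide +kernel
lemma hep_i04 : 2 ≤ (hepS0 ∩ hepS4).card := by decide +kernel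
lemma hep_i10 : 2 ≤ (hepS1 ∩ hepS0).card := by decide +kernel
lemma hep_i11 : 2 ≤ (hepS1 ∩ hepS1).card := by decide +kernel
lemma hep_i12 : 2 ≤ (hepS1 ∩ hepS2).card := by decide +kernel
lemma hep_i13 : 2 ≤ (hepS1 ∩ hepS3).card := by decide +kernel
lemma hep_i14 : 2 ≤ (hepS1 ∩ hepS4).card := by decide +kernel
lemma hep_i20 : 2 ≤ (hepS2 ∩ hepS0).card := by decide +kernel
lemma hep_i21 : 2 ≤ (hepS2 ∩ hepS1).card := by decide +kernel
lemma hep_i22 : 2 ≤ (hepS2 ∩ hepS2).card := by decide +kernel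
lemma hep_i23 : 2 ≤ (hepS2 ∩ hepS3).card := by decide +kernel
lemma hep_i24 : 2 ≤ (hepS2 ∩ hepS4).card := by decide +kernel
lemma hep_i30 : 2 ≤ (hepS3 ∩ hepS0).card := by decide +kernel
lemma hep_i31 : 2 ≤ (hepS3 ∩ hepS1).card := by decide +kernel
lemma hep_i32 : 2 ≤ (hepS3 ∩ hepS2).card := by decide +kernel
lemma hep_i33 : 2 ≤ (hepS3 ∩ hepS3).card := by decide +kernel
lemma hep_i34 : 2 ≤ (hepS3 ∩ hepS4).card := by decide +kernel
lemma hep_i40 : 2 ≤ (hepS4 ∩ hepS0).card := by decide +kernel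
lemma hep_i41 : 2 ≤ (hepS4 ∩ hepS1).card := by decide +kernel
lemma hep_i42 : 2 ≤ (hepS4 ∩ hepS2).card := by decide +kernel
lemma hep_i43 : 2 ≤ (hepS4 ∩ hepS3).card := by decide +kernel
lemma hep_i44 : 2 ≤ (hepS4 ∩ hepS4).card := by decide +kernel

lemma hep_SL_inter (S : Finset (Fin 14)) (hS : S ∈ hepSL) (S' : Finset (Fin 14))
    (hS' : S' ∈ hepSL) : 2 ≤ (S ∩ S').card := by
  rcases hepSL_cases hS with rfl | rfl | rfl | rfl | rfl <;>
    rcases hepSL_cases hS' with rfl | rfl | rfl | rfl | rfl <;>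
    first | exact hep_i00 | exact hep_i01 | exact hep_i02 | exact hep_i03 | exact hep_i04 | exact hep_i10 | exact hep_i11 | exact hep_i12 | exact hep_i13 | exact hep_i14 | exact hep_i20 | exact hep_i21 | exact hep_i22 | exact hep_i23 | exact hep_i24 | exact hep_i30 | exact hep_i31 | exact hep_i32 | exact hep_i33 | exact hep_i34 | exact hep_i40 | exact hep_i41 | exact hep_i42 | exact hep_i43 | exact hep_i44

lemma hep_SL_card : hepSL.card = 5 := by decide +kernel

lemma hep_S_inter_empty : hepS1 ∩ hepS2 ∩ hepS3 ∩ hepS4 = ∅ := by decide +kernel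

lemma hep_SL_mem1 : hepS1 ∈ hepSL := by decide +kernel
lemma hep_SL_mem2 : hepS2 ∈ hepSL := by decide +kernel
lemma hep_SL_mem3 : hepS3 ∈ hepSL := by decide +kernel
lemma hep_SL_mem4 : hepS4 ∈ hepSL := by decide +kernel

end HepAux

/-- there is a 2-intersecting family of 5 triangulations of the heptagon
which is not the family of all triangulations containing a fixed pair of diagonals;
and no pair of distinct noncrossing diagonals lies in more than 5 triangulations. -/
theorem stmt15 :
    (∃ F : Set (Finset (Finset (Fin 7))),
      (∀ T ∈ F, IsTriangulation T) ∧
      (∀ T ∈ F, ∀ T' ∈ F, 2 ≤ (T ∩ T').card) ∧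
      F.ncard = 5 ∧
      ¬ ∃ p q : Finset (Fin 7), IsDiag p ∧ IsDiag q ∧ p ≠ q ∧
        F = {T | IsTriangulation T ∧ p ∈ T ∧ q ∈ T}) ∧
    (∀ p q : Finset (Fin 7), IsDiag p → IsDiag q → p ≠ q → ¬ Crosses p q →
      {T | IsTriangulation T ∧ p ∈ T ∧ q ∈ T}.ncard ≤ 5) := by
  constructor
  · refine ⟨(↑hepL5 : Set (Finset (Finset (Fin 7)))), ?_, ?_, ?_, ?_⟩
    · intro T hT
      obtain ⟨S, hS, rfl⟩ := Finset.mem_image.mp (Finset.mem_coe.mp hT)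
      exact hep_isTri S (hep_goodSL S hS)
    · intro T hT T' hT'
      obtain ⟨S, hS, rfl⟩ := Finset.mem_image.mp (Finset.mem_coe.mp hT)
      obtain ⟨S', hS', rfl⟩ := Finset.mem_image.mp (Finset.mem_coe.mp hT')
      rw [hepIm, hepIm, ← Finset.image_inter _ _ hepE_injective,
        Finset.card_image_of_injective _ hepE_injective]
      exact hep_SL_inter S hS S' hS'
    · rw [Set.ncard_coe_finset, hepL5, Finset.card_image_of_injective _ hepIm_injective,
        hep_SL_card]
    · rintro ⟨p, q, hp, hq, hpq, hF⟩
      have hmem : ∀ T ∈ hepL5, p ∈ T := by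
        intro T hT
        have hT' : T ∈ (↑hepL5 : Set (Finset (Finset (Fin 7)))) := Finset.mem_coe.mpr hT
        rw [hF] at hT'
        exact hT'.2.1
      have h1 : p ∈ hepIm hepS1 := hmem _ (Finset.mem_image_of_mem hepIm hep_SL_mem1)
      have h2 : p ∈ hepIm hepS2 := hmem _ (Finset.mem_image_of_mem hepIm hep_SL_mem2)
      have h3 : p ∈ hepIm hepS3 := hmem _ (Finset.mem_image_of_mem hepIm hep_SL_mem3)
      have h4 : p ∈ hepIm hepS4 := hmem _ (Finset.mem_image_of_mem hepIm hep_SL_mem4)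
      have hmem4 : p ∈ hepIm hepS1 ∩ hepIm hepS2 ∩ hepIm hepS3 ∩ hepIm hepS4 := by
        rw [Finset.mem_inter, Finset.mem_inter, Finset.mem_inter]
        exact ⟨⟨⟨h1, h2⟩, h3⟩, h4⟩
      simp only [hepIm] at hmem4
      rw [← Finset.image_inter _ _ hepE_injective, ← Finset.image_inter _ _ hepE_injective,
        ← Finset.image_inter _ _ hepE_injective, hep_S_inter_empty, Finset.image_empty] at hmem4
      exact Finset.notMem_empty p hmem4
  · intro p q hp hq hne hnc
    obtain ⟨i, rfl⟩ := hep_diag_mem hp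
    obtain ⟨j, rfl⟩ := hep_diag_mem hq
    have hij : i ≠ j := fun h => hne (congrArg hepE h)
    have hncij : ¬ crossIdx i j := fun h => hnc ((hep_cross_iff i j).mpr h)
    set G : Finset (Finset (Finset (Fin 7))) :=
      (hepMasks.toFinset.filter
        (fun c => c.testBit i.val = true ∧ c.testBit j.val = true)).image
        (fun c => (Finset.univ.filter (fun k : Fin 14 => c.testBit k.val = true)).image hepE)
      with hG
    have hsub : {T | IsTriangulation T ∧ hepE i ∈ T ∧ hepE j ∈ T} ⊆ (↑G : Set _) := by
      rintro T ⟨hT, hiT, hjT⟩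
      obtain ⟨S, hgood, rfl⟩ := hep_tri_to hT
      have hiS : i ∈ S := by
        obtain ⟨i', hi', he⟩ := Finset.mem_image.mp hiT
        rwa [hepE_inj i' i he] at hi'
      have hjS : j ∈ S := by
        obtain ⟨j', hj', he⟩ := Finset.mem_image.mp hjT
        rwa [hepE_inj j' j he] at hj'
      have hm : hepEnc S ∈ hepMasks.toFinset := List.mem_toFinset.mpr (hep_mem_masks S hgood)
      have hbi : (hepEnc S).testBit i.val = true := (hep_testBit_enc S i.val).mpr ⟨i, hiS, rfl⟩
      have hbj : (hepEnc S).testBit j.val = true := (hep_testBit_enc S j.val).mpr ⟨j, hjS, rfl⟩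
      refine Finset.mem_coe.mpr (Finset.mem_image.mpr
        ⟨hepEnc S, Finset.mem_filter.mpr ⟨hm, hbi, hbj⟩, ?_⟩)
      rw [← hep_S_eq S]
    calc {T | IsTriangulation T ∧ hepE i ∈ T ∧ hepE j ∈ T}.ncard
        ≤ (↑G : Set (Finset (Finset (Fin 7)))).ncard :=
          Set.ncard_le_ncard hsub (G.finite_toSet)
      _ = G.card := Set.ncard_coe_finset G
      _ ≤ (hepMasks.toFinset.filter
            (fun c => c.testBit i.val = true ∧ c.testBit j.val = true)).card :=
          Finset.card_image_le
      _ ≤ 5 := hep_count i j hij hncij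
end

section
/- Let C be a flag pure 2-dimensional complex without boundary, F an intersecting family of triangles of C, and σ = {a,b,c} a triangle of C that is an inclusion-minimal base face for F (every triangle in F meets σ, and no proper subset of σ meets all of F). Then |F| ≤ 4. -/
variable {V : Type*} [DecidableEq V]

private lemma third_unique {V : Type*} [DecidableEq V] {B : Finset V} (hB : B.card = 3)
    {x y s s' : V} (hx : x ∈ B) (hy : y ∈ B) (hs : s ∈ B) (hs' : s' ∈ B)
    (hxy : x ≠ y) (hsx : s ≠ x) (hsy : s ≠ y) (hs'x : s' ≠ x) (hs'y : s' ≠ y) :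
    s = s' := by
  by_contra hss
  have hsub : ({s, s', x, y} : Finset V) ⊆ B := by
    intro z hz
    simp only [Finset.mem_insert, Finset.mem_singleton] at hz
    rcases hz with rfl | rfl | rfl | rfl <;> assumption
  have h4 : ({s, s', x, y} : Finset V).card = 4 := by
    rw [Finset.card_insert_of_notMem (by simp [hss, hsx, hsy]),
        Finset.card_insert_of_notMem (by simp [hs'x, hs'y]),
        Finset.card_insert_of_notMem (by simp [hxy]),
        Finset.card_singleton]
  have := Finset.card_le_card hsub
  omega

/-- if a triangle σ of a flag pure 2-complex without boundary is an
inclusion-minimal base face for an intersecting family F of triangles, then |F| ≤ 4. -/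
theorem stmt18 {V : Type*} [DecidableEq V] [Fintype V] (C : Set (Finset V))
    (hC : IsComplex C) (hflag : IsFlag C) (hpure : IsPure C 2) (hnb : NoBoundary C)
    (F : Set (Finset V)) (hFfac : ∀ A ∈ F, IsFacet C A) (hFint : Intersecting F)
    (σ : Finset V) (hσ : σ ∈ C) (hcard : σ.card = 3)
    (hbase : ∀ A ∈ F, (A ∩ σ).Nonempty)
    (hmin : ∀ τ : Finset V, τ ⊂ σ → ∃ A ∈ F, A ∩ τ = ∅) :
    F.ncard ≤ 4 := by
  classical
  obtain ⟨hfac1, hfac2⟩ := hpure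
  have hfaceC : ∀ A ∈ F, A ∈ C := fun A hA => (hFfac A hA).1
  have hfcard : ∀ A ∈ F, A.card = 3 := fun A hA => hfac2 A (hFfac A hA)
  have hcardle : ∀ τ ∈ C, τ.card ≤ 3 := by
    intro τ hτ
    obtain ⟨A, hA, hsub⟩ := hfac1 τ hτ
    have h1 := Finset.card_le_card hsub
    have h2 := hfac2 A hA
    omega
  have hedge : ∀ τ ∈ C, ∀ u ∈ τ, ∀ w ∈ τ, ({u, w} : Finset V) ∈ C := by
    intro τ hτ u hu w hw
    exact hC τ hτ _ (by simp [Finset.insert_subset_iff, hu, hw])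
  obtain ⟨a, b, c, hab, hac, hbc, hσeq⟩ := Finset.card_eq_three.mp hcard
  subst hσeq
  -- edges inside σ
  have keyσ : ∀ z w : V, z ∈ ({a,b,c} : Finset V) → w ∈ ({a,b,c} : Finset V) →
      ({z, w} : Finset V) ∈ C := fun z w hz hw => hedge _ hσ z hz w hw
  -- L1 : no vertex adjacent to all of a, b, c outside σ
  have L1 : ∀ v : V, ({v, a} : Finset V) ∈ C → ({v, b} : Finset V) ∈ C →
      ({v, c} : Finset V) ∈ C → v ∈ ({a,b,c} : Finset V) := by
    intro v hva hvb hvc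
    by_contra hv
    have key : ∀ z ∈ insert v ({a,b,c} : Finset V), ({v, z} : Finset V) ∈ C := by
      intro z hz
      simp only [Finset.mem_insert, Finset.mem_singleton] at hz
      rcases hz with rfl | rfl | rfl | rfl
      · exact hC _ hva _ (by simp [Finset.insert_subset_iff])
      · exact hva
      · exact hvb
      · exact hvc
    have hτ : insert v ({a,b,c} : Finset V) ∈ C := by
      apply hflag _ ⟨v, Finset.mem_insert_self _ _⟩
      intro x hx y hy
      by_cases hxv : x = v
      · subst hxv; exact key y hy
      by_cases hyv : y = v
      · subst hyv; rw [Finset.pair_comm]; exact key x hx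
      have hx' : x ∈ ({a,b,c} : Finset V) := by
        rcases Finset.mem_insert.mp hx with h | h; · exact absurd h hxv
        exact h
      have hy' : y ∈ ({a,b,c} : Finset V) := by
        rcases Finset.mem_insert.mp hy with h | h; · exact absurd h hyv
        exact h
      exact keyσ x y hx' hy'
    have h4 : (insert v ({a,b,c} : Finset V)).card = 4 := by
      rw [Finset.card_insert_of_notMem hv, hcard]
    have := hcardle _ hτ
    omega
  -- extraction of the three witnesses
  have habc : a ∈ ({a,b,c} : Finset V) := by simp
  have hbabc : b ∈ ({a,b,c} : Finset V) := by simp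
  have hcabc : c ∈ ({a,b,c} : Finset V) := by simp
  -- A_a
  obtain ⟨Aa, hAaF, hAad⟩ := hmin {b, c} (by
    refine (Finset.ssubset_iff_of_subset ?_).mpr ⟨a, by simp, by simp [hab, hac]⟩
    intro x hx; simp only [Finset.mem_insert, Finset.mem_singleton] at hx ⊢; tauto)
  have hbAa : b ∉ Aa := by
    intro h
    have : b ∈ Aa ∩ ({b,c} : Finset V) := Finset.mem_inter.mpr ⟨h, by simp⟩
    rw [hAad] at this; exact absurd this (Finset.notMem_empty b)
  have hcAa : c ∉ Aa := by
    intro h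
    have : c ∈ Aa ∩ ({b,c} : Finset V) := Finset.mem_inter.mpr ⟨h, by simp⟩
    rw [hAad] at this; exact absurd this (Finset.notMem_empty c)
  have haAa : a ∈ Aa := by
    obtain ⟨x, hx⟩ := hbase Aa hAaF
    rw [Finset.mem_inter] at hx
    have := hx.2
    simp only [Finset.mem_insert, Finset.mem_singleton] at this
    rcases this with rfl | rfl | rfl
    · exact hx.1
    · exact absurd hx.1 hbAa
    · exact absurd hx.1 hcAa
  -- A_b
  obtain ⟨Ab, hAbF, hAbd⟩ := hmin {a, c} (by
    refine (Finset.ssubset_iff_of_subset ?_).mpr ⟨b, by simp, by simp [hab.symm, hbc]⟩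
    intro x hx; simp only [Finset.mem_insert, Finset.mem_singleton] at hx ⊢; tauto)
  have haAb : a ∉ Ab := by
    intro h
    have : a ∈ Ab ∩ ({a,c} : Finset V) := Finset.mem_inter.mpr ⟨h, by simp⟩
    rw [hAbd] at this; exact absurd this (Finset.notMem_empty a)
  have hcAb : c ∉ Ab := by
    intro h
    have : c ∈ Ab ∩ ({a,c} : Finset V) := Finset.mem_inter.mpr ⟨h, by simp⟩
    rw [hAbd] at this; exact absurd this (Finset.notMem_empty c)
  have hbAb : b ∈ Ab := by
    obtain ⟨x, hx⟩ := hbase Ab hAbF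
    rw [Finset.mem_inter] at hx
    have := hx.2
    simp only [Finset.mem_insert, Finset.mem_singleton] at this
    rcases this with rfl | rfl | rfl
    · exact absurd hx.1 haAb
    · exact hx.1
    · exact absurd hx.1 hcAb
  -- A_c
  obtain ⟨Ac, hAcF, hAcd⟩ := hmin {a, b} (by
    refine (Finset.ssubset_iff_of_subset ?_).mpr ⟨c, by simp, by simp [hac.symm, hbc.symm]⟩
    intro x hx; simp only [Finset.mem_insert, Finset.mem_singleton] at hx ⊢; tauto)
  have haAc : a ∉ Ac := by
    intro h
    have : a ∈ Ac ∩ ({a,b} : Finset V) := Finset.mem_inter.mpr ⟨h, by simp⟩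
    rw [hAcd] at this; exact absurd this (Finset.notMem_empty a)
  have hbAc : b ∉ Ac := by
    intro h
    have : b ∈ Ac ∩ ({a,b} : Finset V) := Finset.mem_inter.mpr ⟨h, by simp⟩
    rw [hAcd] at this; exact absurd this (Finset.notMem_empty b)
  have hcAc : c ∈ Ac := by
    obtain ⟨x, hx⟩ := hbase Ac hAcF
    rw [Finset.mem_inter] at hx
    have := hx.2
    simp only [Finset.mem_insert, Finset.mem_singleton] at this
    rcases this with rfl | rfl | rfl
    · exact absurd hx.1 haAc
    · exact absurd hx.1 hbAc
    · exact hx.1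
  have hAaC := hfaceC Aa hAaF
  have hAbC := hfaceC Ab hAbF
  have hAcC := hfaceC Ac hAcF
  have hAa3 := hfcard Aa hAaF
  have hAb3 := hfcard Ab hAbF
  have hAc3 := hfcard Ac hAcF
  -- the three pairwise intersection vertices
  obtain ⟨p, hp⟩ := hFint Aa hAaF Ab hAbF
  rw [Finset.mem_inter] at hp
  obtain ⟨q, hq⟩ := hFint Ab hAbF Ac hAcF
  rw [Finset.mem_inter] at hq
  obtain ⟨r, hr⟩ := hFint Aa hAaF Ac hAcF
  rw [Finset.mem_inter] at hr
  have hpa : ({p, a} : Finset V) ∈ C := hedge Aa hAaC p hp.1 a haAa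
  have hpb : ({p, b} : Finset V) ∈ C := hedge Ab hAbC p hp.2 b hbAb
  have hqb : ({q, b} : Finset V) ∈ C := hedge Ab hAbC q hq.1 b hbAb
  have hqc : ({q, c} : Finset V) ∈ C := hedge Ac hAcC q hq.2 c hcAc
  have hra : ({r, a} : Finset V) ∈ C := hedge Aa hAaC r hr.1 a haAa
  have hrc : ({r, c} : Finset V) ∈ C := hedge Ac hAcC r hr.2 c hcAc
  have hpna : p ≠ a := fun h => haAb (h ▸ hp.2)
  have hpnb : p ≠ b := fun h => hbAa (h ▸ hp.1)
  have hpnc : p ≠ c := fun h => hcAa (h ▸ hp.1)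
  have hqna : q ≠ a := fun h => haAb (h ▸ hq.1)
  have hqnb : q ≠ b := fun h => hbAc (h ▸ hq.2)
  have hqnc : q ≠ c := fun h => hcAb (h ▸ hq.1)
  have hrna : r ≠ a := fun h => haAc (h ▸ hr.2)
  have hrnb : r ≠ b := fun h => hbAa (h ▸ hr.1)
  have hrnc : r ≠ c := fun h => hcAa (h ▸ hr.1)
  have hpcN : ({p, c} : Finset V) ∉ C := by
    intro h
    have := L1 p hpa hpb h
    simp only [Finset.mem_insert, Finset.mem_singleton] at this
    tauto
  have hqaN : ({q, a} : Finset V) ∉ C := by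
    intro h
    have := L1 q h hqb hqc
    simp only [Finset.mem_insert, Finset.mem_singleton] at this
    tauto
  have hrbN : ({r, b} : Finset V) ∉ C := by
    intro h
    have := L1 r hra h hrc
    simp only [Finset.mem_insert, Finset.mem_singleton] at this
    tauto
  have hpq : p ≠ q := fun h => hqaN (h ▸ hpa)
  have hpr : p ≠ r := fun h => hrbN (h ▸ hpb)
  have hqr : q ≠ r := fun h => hqaN (h.symm ▸ hra)
  -- the four possible members
  have hmem : ∀ A ∈ F, A = ({a,b,c} : Finset V) ∨ A = Aa ∨ A = Ab ∨ A = Ac := by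
    intro A hA
    have hAC := hfaceC A hA
    have hA3 := hfcard A hA
    by_cases ha' : a ∈ A <;> by_cases hb' : b ∈ A <;> by_cases hc' : c ∈ A
    · -- all three : A = σ
      left
      refine (Finset.eq_of_subset_of_card_le ?_ (le_of_eq (hA3.trans hcard.symm))).symm
      intro z hz
      simp only [Finset.mem_insert, Finset.mem_singleton] at hz
      rcases hz with rfl | rfl | rfl <;> assumption
    · -- a, b ∈ A, c ∉ A : impossible
      exfalso
      obtain ⟨t, ht⟩ := hFint A hA Ac hAcF
      rw [Finset.mem_inter] at ht
      have h1 : ({t, a} : Finset V) ∈ C := hedge A hAC t ht.1 a ha'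
      have h2 : ({t, b} : Finset V) ∈ C := hedge A hAC t ht.1 b hb'
      have h3 : ({t, c} : Finset V) ∈ C := hedge Ac hAcC t ht.2 c hcAc
      have := L1 t h1 h2 h3
      simp only [Finset.mem_insert, Finset.mem_singleton] at this
      rcases this with rfl | rfl | rfl
      · exact haAc ht.2
      · exact hbAc ht.2
      · exact hc' ht.1
    · -- a, c ∈ A, b ∉ A : impossible
      exfalso
      obtain ⟨t, ht⟩ := hFint A hA Ab hAbF
      rw [Finset.mem_inter] at ht
      have h1 : ({t, a} : Finset V) ∈ C := hedge A hAC t ht.1 a ha'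
      have h2 : ({t, b} : Finset V) ∈ C := hedge Ab hAbC t ht.2 b hbAb
      have h3 : ({t, c} : Finset V) ∈ C := hedge A hAC t ht.1 c hc'
      have := L1 t h1 h2 h3
      simp only [Finset.mem_insert, Finset.mem_singleton] at this
      rcases this with rfl | rfl | rfl
      · exact haAb ht.2
      · exact hb' ht.1
      · exact hcAb ht.2
    · -- only a : A = Aa
      right; left
      obtain ⟨s, hs⟩ := hFint A hA Ab hAbF
      rw [Finset.mem_inter] at hs
      have hsa : ({s, a} : Finset V) ∈ C := hedge A hAC s hs.1 a ha'
      have hsp : s = p := by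
        refine third_unique hAb3 hbAb hq.1 hs.2 hp.2 hqnb.symm ?_ ?_ hpnb ?_
        · exact fun h => hb' (h ▸ hs.1)
        · exact fun h => hqaN (h ▸ hsa)
        · exact fun h => hqaN (h ▸ hpa)
      obtain ⟨t, ht⟩ := hFint A hA Ac hAcF
      rw [Finset.mem_inter] at ht
      have hta : ({t, a} : Finset V) ∈ C := hedge A hAC t ht.1 a ha'
      have htr : t = r := by
        refine third_unique hAc3 hcAc hq.2 ht.2 hr.2 hqnc.symm ?_ ?_ hrnc ?_
        · exact fun h => hc' (h ▸ ht.1)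
        · exact fun h => hqaN (h ▸ hta)
        · exact fun h => hqaN (h ▸ hra)
      have hsub1 : ({a, p, r} : Finset V) ⊆ A := by
        intro z hz
        simp only [Finset.mem_insert, Finset.mem_singleton] at hz
        rcases hz with rfl | rfl | rfl
        · exact ha'
        · exact hsp ▸ hs.1
        · exact htr ▸ ht.1
      have hsub2 : ({a, p, r} : Finset V) ⊆ Aa := by
        intro z hz
        simp only [Finset.mem_insert, Finset.mem_singleton] at hz
        rcases hz with rfl | rfl | rfl
        · exact haAa
        · exact hp.1
        · exact hr.1
      have hc3 : ({a, p, r} : Finset V).card = 3 := by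
        rw [Finset.card_insert_of_notMem (by simp [hpna.symm, hrna.symm]),
            Finset.card_insert_of_notMem (by simp [hpr]), Finset.card_singleton]
      have e1 : A = ({a, p, r} : Finset V) :=
        (Finset.eq_of_subset_of_card_le hsub1 (by omega)).symm
      have e2 : Aa = ({a, p, r} : Finset V) :=
        (Finset.eq_of_subset_of_card_le hsub2 (by omega)).symm
      rw [e1, e2]
    · -- b, c ∈ A, a ∉ A : impossible
      exfalso
      obtain ⟨t, ht⟩ := hFint A hA Aa hAaF
      rw [Finset.mem_inter] at ht
      have h1 : ({t, a} : Finset V) ∈ C := hedge Aa hAaC t ht.2 a haAa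
      have h2 : ({t, b} : Finset V) ∈ C := hedge A hAC t ht.1 b hb'
      have h3 : ({t, c} : Finset V) ∈ C := hedge A hAC t ht.1 c hc'
      have := L1 t h1 h2 h3
      simp only [Finset.mem_insert, Finset.mem_singleton] at this
      rcases this with rfl | rfl | rfl
      · exact ha' ht.1
      · exact hbAa ht.2
      · exact hcAa ht.2
    · -- only b : A = Ab
      right; right; left
      obtain ⟨s, hs⟩ := hFint A hA Aa hAaF
      rw [Finset.mem_inter] at hs
      have hsb : ({s, b} : Finset V) ∈ C := hedge A hAC s hs.1 b hb'
      have hsp : s = p := by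
        refine third_unique hAa3 haAa hr.1 hs.2 hp.1 hrna.symm ?_ ?_ hpna ?_
        · exact fun h => ha' (h ▸ hs.1)
        · exact fun h => hrbN (h ▸ hsb)
        · exact fun h => hrbN (h ▸ hpb)
      obtain ⟨t, ht⟩ := hFint A hA Ac hAcF
      rw [Finset.mem_inter] at ht
      have htb : ({t, b} : Finset V) ∈ C := hedge A hAC t ht.1 b hb'
      have htq : t = q := by
        refine third_unique hAc3 hcAc hr.2 ht.2 hq.2 hrnc.symm ?_ ?_ hqnc ?_
        · exact fun h => hc' (h ▸ ht.1)
        · exact fun h => hrbN (h ▸ htb)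
        · exact fun h => hrbN (h ▸ hqb)
      have hsub1 : ({b, p, q} : Finset V) ⊆ A := by
        intro z hz
        simp only [Finset.mem_insert, Finset.mem_singleton] at hz
        rcases hz with rfl | rfl | rfl
        · exact hb'
        · exact hsp ▸ hs.1
        · exact htq ▸ ht.1
      have hsub2 : ({b, p, q} : Finset V) ⊆ Ab := by
        intro z hz
        simp only [Finset.mem_insert, Finset.mem_singleton] at hz
        rcases hz with rfl | rfl | rfl
        · exact hbAb
        · exact hp.2
        · exact hq.1
      have hc3 : ({b, p, q} : Finset V).card = 3 := by
        rw [Finset.card_insert_of_notMem (by simp [hpnb.symm, hqnb.symm]),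
            Finset.card_insert_of_notMem (by simp [hpq]), Finset.card_singleton]
      have e1 : A = ({b, p, q} : Finset V) :=
        (Finset.eq_of_subset_of_card_le hsub1 (by omega)).symm
      have e2 : Ab = ({b, p, q} : Finset V) :=
        (Finset.eq_of_subset_of_card_le hsub2 (by omega)).symm
      rw [e1, e2]
    · -- only c : A = Ac
      right; right; right
      obtain ⟨s, hs⟩ := hFint A hA Aa hAaF
      rw [Finset.mem_inter] at hs
      have hsc : ({s, c} : Finset V) ∈ C := hedge A hAC s hs.1 c hc'
      have hsr : s = r := by
        refine third_unique hAa3 haAa hp.1 hs.2 hr.1 hpna.symm ?_ ?_ hrna ?_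
        · exact fun h => ha' (h ▸ hs.1)
        · exact fun h => hpcN (h ▸ hsc)
        · exact fun h => hpcN (h ▸ hrc)
      obtain ⟨t, ht⟩ := hFint A hA Ab hAbF
      rw [Finset.mem_inter] at ht
      have htc : ({t, c} : Finset V) ∈ C := hedge A hAC t ht.1 c hc'
      have htq : t = q := by
        refine third_unique hAb3 hbAb hp.2 ht.2 hq.1 hpnb.symm ?_ ?_ hqnb ?_
        · exact fun h => hb' (h ▸ ht.1)
        · exact fun h => hpcN (h ▸ htc)
        · exact fun h => hpcN (h ▸ hqc)
      have hsub1 : ({c, q, r} : Finset V) ⊆ A := by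
        intro z hz
        simp only [Finset.mem_insert, Finset.mem_singleton] at hz
        rcases hz with rfl | rfl | rfl
        · exact hc'
        · exact htq ▸ ht.1
        · exact hsr ▸ hs.1
      have hsub2 : ({c, q, r} : Finset V) ⊆ Ac := by
        intro z hz
        simp only [Finset.mem_insert, Finset.mem_singleton] at hz
        rcases hz with rfl | rfl | rfl
        · exact hcAc
        · exact hq.2
        · exact hr.2
      have hc3 : ({c, q, r} : Finset V).card = 3 := by
        rw [Finset.card_insert_of_notMem (by simp [hqnc.symm, hrnc.symm]),
            Finset.card_insert_of_notMem (by simp [hqr]), Finset.card_singleton]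
      have e1 : A = ({c, q, r} : Finset V) :=
        (Finset.eq_of_subset_of_card_le hsub1 (by omega)).symm
      have e2 : Ac = ({c, q, r} : Finset V) :=
        (Finset.eq_of_subset_of_card_le hsub2 (by omega)).symm
      rw [e1, e2]
    · -- no vertex of σ : contradicts hbase
      exfalso
      obtain ⟨x, hx⟩ := hbase A hA
      rw [Finset.mem_inter] at hx
      have := hx.2
      simp only [Finset.mem_insert, Finset.mem_singleton] at this
      rcases this with rfl | rfl | rfl
      · exact ha' hx.1
      · exact hb' hx.1
      · exact hc' hx.1
  -- conclude
  have hFsub : F ⊆ ↑({{a,b,c}, Aa, Ab, Ac} : Finset (Finset V)) := by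
    intro A hA
    simp only [Finset.coe_insert, Set.mem_insert_iff, Finset.coe_singleton,
      Set.mem_singleton_iff]
    exact hmem A hA
  have hS4 : ({{a,b,c}, Aa, Ab, Ac} : Finset (Finset V)).card ≤ 4 := by
    have h1 := Finset.card_insert_le ({a,b,c} : Finset V) ({Aa, Ab, Ac} : Finset (Finset V))
    have h2 := Finset.card_insert_le Aa ({Ab, Ac} : Finset (Finset V))
    have h3 := Finset.card_insert_le Ab ({Ac} : Finset (Finset V))
    have h4 : ({Ac} : Finset (Finset V)).card = 1 := Finset.card_singleton _
    omega
  calc F.ncard ≤ (↑({{a,b,c}, Aa, Ab, Ac} : Finset (Finset V)) : Set (Finset V)).ncard :=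
        Set.ncard_le_ncard hFsub (Finset.finite_toSet _)
    _ = ({{a,b,c}, Aa, Ab, Ac} : Finset (Finset V)).card := Set.ncard_coe_finset _
    _ ≤ 4 := hS4
end
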